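/- arXiv:1811.10518 — 4 statements merged into one kernel-verified Lean document; each statement's English description precedes it below -/
import Mathlib

section
/- Let M and N be subspaces of ℂ^n in generic position (i.e., M∩N = M∩N^⊥ = M^⊥∩N = M^⊥∩N^⊥ = {0}). Then the pair (M, N) is unitarily equivalent to the pair (M^⊥, N^⊥): there exists a unitary operator U on ℂ^n with U(M) = M^⊥ and U(N) = N^⊥. -/
section AuxGeneric



variable {E : Type*} [NormedAddCommGroup E] [InnerProductSpace ℂ E] [FiniteDimensional ℂ E]

noncomputable def clmAlgEquivAux : (E →L[ℂ] E) ≃ₐ[ℂ] (E →ₗ[ℂ] E) :=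
  AlgEquiv.ofLinearEquiv
    (LinearMap.toContinuousLinearMap (𝕜 := ℂ) (E := E) (F' := E)).symm rfl (fun _ _ => rfl)

lemma finite_spectrum_real_aux (a : E →L[ℂ] E) : (spectrum ℝ a).Finite := by
  have h₁ : spectrum ℂ a = spectrum ℂ (clmAlgEquivAux a) := (AlgEquiv.spectrum_eq _ _).symm
  have h₂ : (spectrum ℂ a).Finite := by
    rw [h₁]; exact Module.End.finite_spectrum _
  rw [← spectrum.preimage_algebraMap ℂ]
  exact h₂.preimage (Complex.ofReal_injective.injOn)

lemma commute_aeval_aux {A : Type*} [Ring A] [Algebra ℝ A] {a b : A} (h : Commute a b)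
    (p : Polynomial ℝ) : Commute (Polynomial.aeval a p) b := by
  induction p using Polynomial.induction_on' with
  | add p q hp hq => rw [map_add]; exact hp.add_left hq
  | monomial n c =>
      rw [Polynomial.aeval_monomial]
      exact Commute.mul_left (Algebra.commutes c b) (h.pow_left n)

lemma commute_cfc_aux {a b : E →L[ℂ] E} (ha : IsSelfAdjoint a) (hab : Commute a b) (f : ℝ → ℝ) :
    Commute (cfc f a) b := by
  by_cases hf : ContinuousOn f (spectrum ℝ a)
  · classical
    have hfin := finite_spectrum_real_aux a
    set p := Lagrange.interpolate hfin.toFinset id f with hp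
    have h1 : cfc f a = Polynomial.aeval a p := by
      rw [← cfc_polynomial p a]
      refine cfc_congr fun x hx => ?_
      exact (Lagrange.eval_interpolate_at_node f (Set.injOn_id _)
        (hfin.mem_toFinset.mpr hx)).symm
    rw [h1]
    exact commute_aeval_aux hab p
  · rw [cfc_apply_of_not_continuousOn a hf]
    exact Commute.zero_left b




local notation "⟪" x ", " y "⟫" => @inner ℂ _ _ x y

lemma isUnit_of_injective_aux {a : E →L[ℂ] E} (h : Function.Injective ⇑a) : IsUnit a := by
  rw [ContinuousLinearMap.isUnit_iff_bijective]
  exact ⟨h, (LinearMap.injective_iff_surjective (f := (a : E →ₗ[ℂ] E))).mp h⟩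

lemma spectrum_sq_pos_aux {a : E →L[ℂ] E} (ha : IsSelfAdjoint a) (hinj : Function.Injective ⇑a) :
    spectrum ℝ (a * a) ⊆ Set.Ioi 0 := by
  intro x hx
  by_contra hx0
  have hxle : x ≤ 0 := le_of_not_gt fun h => hx0 h
  rw [spectrum.mem_iff] at hx
  refine hx (isUnit_of_injective_aux ?_)
  intro u v huv
  rw [← sub_eq_zero, ← map_sub] at huv
  set w := u - v with hw
  rw [← sub_eq_zero, ← hw]
  have happ : (x : ℂ) • w - a (a w) = 0 := by
    have : (algebraMap ℝ (E →L[ℂ] E)) x = algebraMap ℂ (E →L[ℂ] E) (x : ℂ) := by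
      rw [IsScalarTower.algebraMap_apply ℝ ℂ (E →L[ℂ] E)]; rfl
    simpa [this, Algebra.algebraMap_eq_smul_one, ContinuousLinearMap.sub_apply,
      ContinuousLinearMap.mul_apply, ContinuousLinearMap.smul_apply,
      ContinuousLinearMap.one_apply] using huv
  have hsym := (ContinuousLinearMap.isSelfAdjoint_iff_isSymmetric.mp ha)
  have e1 : ⟪a (a w), w⟫ = ((‖a w‖ : ℂ))^2 := by
    rw [show ⟪a (a w), w⟫ = ⟪a w, a w⟫ from hsym (a w) w]
    exact_mod_cast inner_self_eq_norm_sq_to_K (𝕜 := ℂ) (a w)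
  have e2 : ⟪(x : ℂ) • w, w⟫ = (x : ℂ) * (‖w‖ : ℂ)^2 := by
    rw [inner_smul_left, Complex.conj_ofReal]
    congr 1
    exact_mod_cast inner_self_eq_norm_sq_to_K (𝕜 := ℂ) w
  have e3 : (x : ℂ) • w = a (a w) := by rwa [sub_eq_zero] at happ
  have e4 : ((‖a w‖ : ℂ))^2 = (x : ℂ) * (‖w‖ : ℂ)^2 := by rw [← e1, ← e3, e2]
  have e5 : (‖a w‖ : ℝ)^2 = x * ‖w‖^2 := by exact_mod_cast e4
  have h6 : ‖a w‖^2 ≤ 0 := e5 ▸ mul_nonpos_of_nonpos_of_nonneg hxle (sq_nonneg _)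
  have h7 : a w = 0 := by
    have := le_antisymm h6 (sq_nonneg _)
    simpa [pow_eq_zero_iff] using this
  have : w = 0 := by
    apply hinj
    simpa using h7
  exact this




lemma exists_sign_aux {a : E →L[ℂ] E} (ha : IsSelfAdjoint a) (hinj : Function.Injective ⇑a) :
    ∃ r : E →L[ℂ] E, IsSelfAdjoint r ∧ (a * r) * (a * r) = 1 ∧ Commute r a ∧
      ∀ b, Commute (a * a) b → Commute r b := by
  have hsa : IsSelfAdjoint (a * a) := by
    rw [IsSelfAdjoint, star_mul, ha.star_eq]
  have hspec := spectrum_sq_pos_aux ha hinj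
  set g : ℝ → ℝ := fun x => (Real.sqrt x)⁻¹ with hg
  have hgc : ContinuousOn g (spectrum ℝ (a * a)) :=
    Real.continuous_sqrt.continuousOn.inv₀ fun x hx => (Real.sqrt_pos.mpr (hspec hx)).ne'
  set r := cfc g (a * a) with hr
  have hr_sa : IsSelfAdjoint r := cfc_predicate g (a * a)
  have hr_comm : ∀ b, Commute (a * a) b → Commute r b := fun b hb =>
    commute_cfc_aux hsa hb g
  have hra : Commute r a := hr_comm a ((Commute.refl a).mul_left (Commute.refl a))
  refine ⟨r, hr_sa, ?_, hra, hr_comm⟩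
  have step : (a * r) * (a * r) = (a * a) * (r * r) := by
    calc (a * r) * (a * r) = a * (r * a) * r := by noncomm_ring
    _ = a * (a * r) * r := by rw [hra.eq]
    _ = (a * a) * (r * r) := by noncomm_ring
  rw [step]
  have hrr : r * r = cfc (fun x => g x * g x) (a * a) := (cfc_mul g g (a * a)).symm
  have haa : (a * a) = cfc (fun x : ℝ => x) (a * a) := (cfc_id ℝ (a * a)).symm
  calc (a * a) * (r * r) = cfc (fun x : ℝ => x) (a * a) * cfc (fun x => g x * g x) (a * a) := by
        rw [← hrr, ← haa]
    _ = cfc (fun x : ℝ => x * (g x * g x)) (a * a) := by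
        rw [← cfc_mul (fun x : ℝ => x) (fun x => g x * g x) (a * a)
          continuousOn_id (hgc.mul hgc)]
    _ = cfc (fun _ : ℝ => (1 : ℝ)) (a * a) := by
        refine cfc_congr fun x hx => ?_
        have hxpos : 0 < x := hspec hx
        simp only [hg]
        rw [← mul_inv, Real.mul_self_sqrt hxpos.le, mul_inv_cancel₀ hxpos.ne']
    _ = 1 := cfc_const_one ℝ (a * a)


end AuxGeneric




set_option maxSynthPendingDepth 3 in
set_option maxHeartbeats 2000000 in
/-- If subspaces `M` and `N` of `ℂⁿ` are in generic position, then the pair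
`(M, N)` is unitarily equivalent to the pair `(Mᗮ, Nᗮ)`. -/
theorem generic_position_unitarily_equivalent_to_perps {n : ℕ}
    (M N : Submodule ℂ (EuclideanSpace ℂ (Fin n)))
    (h1 : M ⊓ N = ⊥) (h2 : M ⊓ Nᗮ = ⊥) (h3 : Mᗮ ⊓ N = ⊥) (h4 : Mᗮ ⊓ Nᗮ = ⊥) :
    ∃ U : EuclideanSpace ℂ (Fin n) ≃ₗᵢ[ℂ] EuclideanSpace ℂ (Fin n),
      M.map (U : EuclideanSpace ℂ (Fin n) →ₗ[ℂ] EuclideanSpace ℂ (Fin n)) = Mᗮ ∧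
      N.map (U : EuclideanSpace ℂ (Fin n) →ₗ[ℂ] EuclideanSpace ℂ (Fin n)) = Nᗮ := by
  set E := EuclideanSpace ℂ (Fin n)
  set P : E →L[ℂ] E := M.subtypeL ∘L M.orthogonalProjectionOnto with hPdef
  set Q : E →L[ℂ] E := N.subtypeL ∘L N.orthogonalProjectionOnto with hQdef
  have hPapp : ∀ x : E, P x = (M.orthogonalProjectionOnto x : E) := fun x => rfl
  have hQapp : ∀ x : E, Q x = (N.orthogonalProjectionOnto x : E) := fun x => rfl
  have hPmem : ∀ x : E, P x ∈ M := fun x => (M.orthogonalProjectionOnto x).2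
  have hQmem : ∀ x : E, Q x ∈ N := fun x => (N.orthogonalProjectionOnto x).2
  have hPfix : ∀ x ∈ M, P x = x := fun x hx => Submodule.starProjection_eq_self_iff.mpr hx
  have hQfix : ∀ x ∈ N, Q x = x := fun x hx => Submodule.starProjection_eq_self_iff.mpr hx
  have hPsub : ∀ x : E, x - P x ∈ Mᗮ := fun x => Submodule.sub_starProjection_mem_orthogonal x
  have hQsub : ∀ x : E, x - Q x ∈ Nᗮ := fun x => Submodule.sub_starProjection_mem_orthogonal x
  have hPzero : ∀ x ∈ Mᗮ, P x = 0 := fun x hx => by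
    rw [hPapp, Submodule.orthogonalProjectionOnto_apply_of_mem_orthogonal hx,
      Submodule.coe_zero]
  have hQzero : ∀ x ∈ Nᗮ, Q x = 0 := fun x hx => by
    rw [hQapp, Submodule.orthogonalProjectionOnto_apply_of_mem_orthogonal hx,
      Submodule.coe_zero]
  have hPidem : P * P = P := ContinuousLinearMap.ext fun x => by rw [ContinuousLinearMap.mul_apply]; exact hPfix (P x) (hPmem x)
  have hQidem : Q * Q = Q := ContinuousLinearMap.ext fun x => by rw [ContinuousLinearMap.mul_apply]; exact hQfix (Q x) (hQmem x)
  have hPsa : IsSelfAdjoint P := isSelfAdjoint_starProjection M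
  have hQsa : IsSelfAdjoint Q := isSelfAdjoint_starProjection N
  clear_value P Q
  set A : E →L[ℂ] E := P + Q - 1 with hAdef
  set B : E →L[ℂ] E := P - Q with hBdef
  have hAsa : IsSelfAdjoint A := by
    rw [hAdef]
    exact (hPsa.add hQsa).sub (IsSelfAdjoint.one _)
  have hBsa : IsSelfAdjoint B := by
    rw [hBdef]
    exact hPsa.sub hQsa
  clear_value A B
  have hAinj : Function.Injective ⇑A := by
    intro u v huv
    rw [← sub_eq_zero, ← map_sub] at huv
    set w := u - v with hw
    rw [← sub_eq_zero, ← hw]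
    have hsum : P w + Q w = w := by
      have happ : P w + Q w - w = 0 := by
        simpa [hAdef, ContinuousLinearMap.sub_apply, ContinuousLinearMap.add_apply,
          ContinuousLinearMap.one_apply] using huv
      exact sub_eq_zero.mp happ
    have hPw0 : P w = 0 := by
      have hmem : P w ∈ M ⊓ Nᗮ := by
        refine Submodule.mem_inf.mpr ⟨hPmem w, ?_⟩
        rw [eq_sub_of_add_eq hsum]
        exact hQsub w
      rw [h2] at hmem
      exact (Submodule.mem_bot ℂ).mp hmem
    have hQw : Q w = w := by
      have := hsum; rw [hPw0, zero_add] at this; exact this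
    have hmem : w ∈ Mᗮ ⊓ N := by
      refine Submodule.mem_inf.mpr ⟨?_, hQw ▸ hQmem w⟩
      have := hPsub w
      rwa [hPw0, sub_zero] at this
    rw [h3] at hmem
    exact (Submodule.mem_bot ℂ).mp hmem
  have hBinj : Function.Injective ⇑B := by
    intro u v huv
    rw [← sub_eq_zero, ← map_sub] at huv
    set w := u - v with hw
    rw [← sub_eq_zero, ← hw]
    have hPQ : P w = Q w := by
      have happ : P w - Q w = 0 := by
        simpa [hBdef, ContinuousLinearMap.sub_apply] using huv
      exact sub_eq_zero.mp happ
    have hPw0 : P w = 0 := by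
      have hmem : P w ∈ M ⊓ N := Submodule.mem_inf.mpr ⟨hPmem w, hPQ ▸ hQmem w⟩
      rw [h1] at hmem
      exact (Submodule.mem_bot ℂ).mp hmem
    have hQw0 : Q w = 0 := by rw [← hPQ]; exact hPw0
    have hmem : w ∈ Mᗮ ⊓ Nᗮ := by
      refine Submodule.mem_inf.mpr ⟨?_, ?_⟩
      · have := hPsub w; rwa [hPw0, sub_zero] at this
      · have := hQsub w; rwa [hQw0, sub_zero] at this
    rw [h4] at hmem
    exact (Submodule.mem_bot ℂ).mp hmem
  -- anticommutation
  have e1 : A * B = Q * P - P * Q := by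
    simp only [hAdef, hBdef, sub_mul, mul_sub, add_mul, mul_add, one_mul, mul_one,
      hPidem, hQidem]
    abel
  have e2 : B * A = P * Q - Q * P := by
    simp only [hAdef, hBdef, sub_mul, mul_sub, add_mul, mul_add, one_mul, mul_one,
      hPidem, hQidem]
    abel
  have hAB : A * B = -(B * A) := by rw [e1, e2]; abel
  have hBA : B * A = -(A * B) := by rw [e1, e2]; abel
  have hA2B : Commute (A * A) B := by
    show A * A * B = B * (A * A)
    calc A * A * B = A * (A * B) := by rw [mul_assoc]
      _ = A * -(B * A) := by rw [hAB]
      _ = -(A * B) * A := by noncomm_ring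
      _ = -(-(B * A)) * A := by rw [hAB]
      _ = B * (A * A) := by noncomm_ring
  have hB2A : Commute (B * B) A := by
    show B * B * A = A * (B * B)
    calc B * B * A = B * (B * A) := by rw [mul_assoc]
      _ = B * -(A * B) := by rw [hBA]
      _ = -(B * A) * B := by noncomm_ring
      _ = -(-(A * B)) * B := by rw [hBA]
      _ = A * (B * B) := by noncomm_ring
  -- signs
  obtain ⟨r, hr_sa, hv_sq, hr_a, hr_univ⟩ := exists_sign_aux hAsa hAinj
  obtain ⟨s, hs_sa, hw_sq, hs_b, hs_univ⟩ := exists_sign_aux hBsa hBinj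
  set v : E →L[ℂ] E := A * r with hvdef
  set w : E →L[ℂ] E := B * s with hwdef
  have hrB : Commute r B := hr_univ B hA2B
  have hsA : Commute s A := hs_univ A hB2A
  have hv_sa : IsSelfAdjoint v := by
    rw [IsSelfAdjoint, hvdef, star_mul, hr_sa.star_eq, hAsa.star_eq, hr_a.eq]
  have hw_sa : IsSelfAdjoint w := by
    rw [IsSelfAdjoint, hwdef, star_mul, hs_sa.star_eq, hBsa.star_eq, hs_b.eq]
  have hvA : v * A = A * v := by
    calc v * A = A * (r * A) := by rw [hvdef, mul_assoc]
      _ = A * (A * r) := by rw [hr_a.eq]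
      _ = A * v := by rw [hvdef]
  have hwB : w * B = B * w := by
    calc w * B = B * (s * B) := by rw [hwdef, mul_assoc]
      _ = B * (B * s) := by rw [hs_b.eq]
      _ = B * w := by rw [hwdef]
  have hvB : v * B = -(B * v) := by
    calc v * B = A * (r * B) := by rw [hvdef, mul_assoc]
      _ = A * (B * r) := by rw [hrB.eq]
      _ = (A * B) * r := by rw [mul_assoc]
      _ = (-(B * A)) * r := by rw [hAB]
      _ = -(B * (A * r)) := by noncomm_ring
      _ = -(B * v) := by rw [hvdef]
  have hwA : w * A = -(A * w) := by
    calc w * A = B * (s * A) := by rw [hwdef, mul_assoc]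
      _ = B * (A * s) := by rw [hsA.eq]
      _ = (B * A) * s := by rw [mul_assoc]
      _ = (-(A * B)) * s := by rw [hBA]
      _ = -(A * (B * s)) := by noncomm_ring
      _ = -(A * w) := by rw [hwdef]
  clear_value v w
  set U : E →L[ℂ] E := v * w with hUdef
  clear_value U
  have hUstar : star U = w * v := by
    rw [hUdef, star_mul, hv_sa.star_eq, hw_sa.star_eq]
  have hU_left : star U * U = 1 := by
    rw [hUstar, hUdef]
    calc w * v * (v * w) = w * (v * v) * w := by noncomm_ring
      _ = 1 := by rw [hv_sq, mul_one, hw_sq]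
  have hU_right : U * star U = 1 := by
    rw [hUstar, hUdef]
    calc v * w * (w * v) = v * (w * w) * v := by noncomm_ring
      _ = 1 := by rw [hw_sq, mul_one, hv_sq]
  have hUA : U * A = -(A * U) := by
    calc U * A = v * (w * A) := by rw [hUdef, mul_assoc]
      _ = v * -(A * w) := by rw [hwA]
      _ = -((v * A) * w) := by noncomm_ring
      _ = -((A * v) * w) := by rw [hvA]
      _ = -(A * U) := by rw [hUdef]; noncomm_ring
  have hUB : U * B = -(B * U) := by
    calc U * B = v * (w * B) := by rw [hUdef, mul_assoc]
      _ = v * (B * w) := by rw [hwB]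
      _ = (v * B) * w := (mul_assoc v B w).symm
      _ = (-(B * v)) * w := by rw [hvB]
      _ = -(B * U) := by rw [hUdef]; noncomm_ring
  -- intertwining with the projections
  have h2P : (2 : ℂ) • P = 1 + A + B := by
    rw [two_smul, hAdef, hBdef]; abel
  have h2P' : (2 : ℂ) • ((1 : E →L[ℂ] E) - P) = 1 - A - B := by
    rw [smul_sub, h2P, two_smul]; abel
  have h2Q : (2 : ℂ) • Q = 1 + A - B := by
    rw [two_smul, hAdef, hBdef]; abel
  have h2Q' : (2 : ℂ) • ((1 : E →L[ℂ] E) - Q) = 1 - A + B := by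
    rw [smul_sub, h2Q, two_smul]; abel
  have hUP : U * P = (1 - P) * U := by
    have key : (2 : ℂ) • (U * P) = (2 : ℂ) • ((1 - P) * U) := by
      calc (2 : ℂ) • (U * P) = U * ((2 : ℂ) • P) := (mul_smul_comm _ _ _).symm
        _ = U * (1 + A + B) := by rw [h2P]
        _ = U + U * A + U * B := by rw [mul_add, mul_add, mul_one]
        _ = U - A * U - B * U := by rw [hUA, hUB]; abel
        _ = (1 - A - B) * U := by rw [sub_mul, sub_mul, one_mul]
        _ = ((2 : ℂ) • ((1 : E →L[ℂ] E) - P)) * U := by rw [h2P']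
        _ = (2 : ℂ) • ((1 - P) * U) := smul_mul_assoc _ _ _
    exact smul_right_injective (E →L[ℂ] E) (two_ne_zero) key
  have hUQ : U * Q = (1 - Q) * U := by
    have key : (2 : ℂ) • (U * Q) = (2 : ℂ) • ((1 - Q) * U) := by
      calc (2 : ℂ) • (U * Q) = U * ((2 : ℂ) • Q) := (mul_smul_comm _ _ _).symm
        _ = U * (1 + A - B) := by rw [h2Q]
        _ = U + U * A - U * B := by rw [mul_sub, mul_add, mul_one]
        _ = U - A * U + B * U := by rw [hUA, hUB]; abel
        _ = (1 - A + B) * U := by rw [add_mul, sub_mul, one_mul]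
        _ = ((2 : ℂ) • ((1 : E →L[ℂ] E) - Q)) * U := by rw [h2Q']
        _ = (2 : ℂ) • ((1 - Q) * U) := smul_mul_assoc _ _ _
    exact smul_right_injective (E →L[ℂ] E) (two_ne_zero) key
  -- build the linear isometry equivalence
  have hleft : ∀ x : E, star U (U x) = x := fun x => by
    have := DFunLike.congr_fun hU_left x
    simpa [ContinuousLinearMap.mul_apply] using this
  have hright : ∀ x : E, U (star U x) = x := fun x => by
    have := DFunLike.congr_fun hU_right x
    simpa [ContinuousLinearMap.mul_apply] using this
  set Ulin : E ≃ₗ[ℂ] E :=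
    LinearEquiv.ofLinear (U : E →ₗ[ℂ] E) ((star U : E →L[ℂ] E) : E →ₗ[ℂ] E)
      (LinearMap.ext fun x => hright x) (LinearMap.ext fun x => hleft x) with hUlin
  have hinner : ∀ x y : E, (inner ℂ (Ulin x) (Ulin y) : ℂ) = inner ℂ x y := by
    intro x y
    have hx : (Ulin x : E) = U x := rfl
    have hy : (Ulin y : E) = U y := rfl
    rw [hx, hy]
    calc (inner ℂ (U x) (U y) : ℂ)
        = inner ℂ (ContinuousLinearMap.adjoint U (U x)) y := by
          rw [ContinuousLinearMap.adjoint_inner_left]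
      _ = inner ℂ x y := by
          rw [← ContinuousLinearMap.star_eq_adjoint, hleft x]
  refine ⟨Ulin.isometryOfInner hinner, ?_, ?_⟩
  · -- M.map = Mᗮ
    apply le_antisymm
    · rintro z hz
      rw [Submodule.mem_map] at hz
      obtain ⟨y, hy, rfl⟩ := hz
      show U y ∈ Mᗮ
      have : U y = U y - P (U y) := by
        conv_lhs => rw [← hPfix y hy]
        have := DFunLike.congr_fun hUP y
        simpa [ContinuousLinearMap.mul_apply, ContinuousLinearMap.sub_apply,
          ContinuousLinearMap.one_apply] using this
      rw [this]
      exact hPsub (U y)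
    · intro z hz
      refine ⟨star U z, ?_, hright z⟩
      have h1P : IsSelfAdjoint ((1 : E →L[ℂ] E) - P) := (IsSelfAdjoint.one _).sub hPsa
      have hPsU : P * star U = star U * (1 - P) := by
        have := congrArg star hUP
        rwa [star_mul, star_mul, hPsa.star_eq, h1P.star_eq] at this
      have : P (star U z) = star U z := by
        have happ := DFunLike.congr_fun hPsU z
        simp only [ContinuousLinearMap.mul_apply, ContinuousLinearMap.sub_apply,
          ContinuousLinearMap.one_apply] at happ
        rw [happ, hPzero z hz, sub_zero]
      rw [hPapp] at this
      exact Submodule.starProjection_eq_self_iff.mp this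
  · apply le_antisymm
    · rintro z hz
      rw [Submodule.mem_map] at hz
      obtain ⟨y, hy, rfl⟩ := hz
      show U y ∈ Nᗮ
      have : U y = U y - Q (U y) := by
        conv_lhs => rw [← hQfix y hy]
        have := DFunLike.congr_fun hUQ y
        simpa [ContinuousLinearMap.mul_apply, ContinuousLinearMap.sub_apply,
          ContinuousLinearMap.one_apply] using this
      rw [this]
      exact hQsub (U y)
    · intro z hz
      refine ⟨star U z, ?_, hright z⟩
      have h1Q : IsSelfAdjoint ((1 : E →L[ℂ] E) - Q) := (IsSelfAdjoint.one _).sub hQsa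
      have hQsU : Q * star U = star U * (1 - Q) := by
        have := congrArg star hUQ
        rwa [star_mul, star_mul, hQsa.star_eq, h1Q.star_eq] at this
      have : Q (star U z) = star U z := by
        have happ := DFunLike.congr_fun hQsU z
        simp only [ContinuousLinearMap.mul_apply, ContinuousLinearMap.sub_apply,
          ContinuousLinearMap.one_apply] at happ
        rw [happ, hQzero z hz, sub_zero]
      rw [hQapp] at this
      exact Submodule.starProjection_eq_self_iff.mp this
end

section
/- If P and Q are orthogonal projections onto subspaces M and N of ℂ^n, then ‖P + Q‖ = 1 + ‖PQ‖ (operator norm), provided P + Q ≠ 0. -/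
/-- The orthogonal projection onto a subspace `K` of `ℂⁿ`, as an operator on `ℂⁿ`. -/
noncomputable def projCLM {n : ℕ} (K : Submodule ℂ (EuclideanSpace ℂ (Fin n))) :
    EuclideanSpace ℂ (Fin n) →L[ℂ] EuclideanSpace ℂ (Fin n) :=
  K.subtypeL.comp (K.orthogonalProjectionOnto)

section Helpers

open ContinuousLinearMap

variable {n : ℕ}

local notation "Euc" => EuclideanSpace ℂ (Fin n)

lemma projCLM_sa (K : Submodule ℂ Euc) : IsSelfAdjoint (projCLM K) :=
  isSelfAdjoint_starProjection K

lemma projCLM_apply_mem (K : Submodule ℂ Euc) {x : Euc} (hx : x ∈ K) :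
    projCLM K x = x := by
  simp only [projCLM, ContinuousLinearMap.comp_apply, Submodule.subtypeL_apply]
  exact Submodule.starProjection_eq_self_iff.mpr hx

lemma projCLM_mem (K : Submodule ℂ Euc) (x : Euc) : projCLM K x ∈ K := by
  simp only [projCLM, ContinuousLinearMap.comp_apply, Submodule.subtypeL_apply]
  exact Submodule.coe_mem (K.orthogonalProjectionOnto x)

lemma projCLM_proj (K : Submodule ℂ Euc) (x : Euc) :
    projCLM K (projCLM K x) = projCLM K x :=
  projCLM_apply_mem K (projCLM_mem K x)

lemma projCLM_idem (K : Submodule ℂ Euc) : projCLM K * projCLM K = projCLM K := by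
  refine ContinuousLinearMap.ext fun x => ?_
  rw [ContinuousLinearMap.mul_apply]
  exact projCLM_proj K x

lemma inner_self_complex (x : Euc) : inner ℂ x x = ((‖x‖ ^ 2 : ℝ) : ℂ) := by
  rw [inner_self_eq_norm_sq_to_K]
  norm_cast

/-- A nonzero self-adjoint operator on a finite-dimensional complex Hilbert space has a real
eigenvalue whose absolute value is the operator norm. -/
lemma exists_eigenvector (T : Euc →L[ℂ] Euc) (hT : IsSelfAdjoint T) (hT0 : T ≠ 0) :
    ∃ (μ : ℝ) (x : Euc), x ≠ 0 ∧ T x = (μ : ℂ) • x ∧ |μ| = ‖T‖ := by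
  have hE : Nontrivial Euc := by
    rcases subsingleton_or_nontrivial Euc with hs | hn
    · exact absurd (Subsingleton.elim T 0) hT0
    · exact hn
  obtain ⟨z, hz, hzr⟩ := spectrum.exists_nnnorm_eq_spectralRadius (a := T)
  have hzn : ‖z‖ = ‖T‖ := by
    rw [hT.spectralRadius_eq_nnnorm] at hzr
    exact_mod_cast congrArg ENNReal.toReal hzr
  have hzre : z = (z.re : ℂ) := hT.mem_spectrum_eq_re hz
  have hker : ∃ x : Euc, x ≠ 0 ∧ T x = z • x := by
    by_contra hcon
    push_neg at hcon
    set A : Euc →L[ℂ] Euc := algebraMap ℂ (Euc →L[ℂ] Euc) z - T with hA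
    have hAx : ∀ x : Euc, A x = z • x - T x := by
      intro x
      simp [hA, Algebra.algebraMap_eq_smul_one]
    have hker0 : ∀ x : Euc, A x = 0 → x = 0 := by
      intro x hx
      rcases eq_or_ne x 0 with h0 | h0
      · exact h0
      · exact absurd ((sub_eq_zero.mp ((hAx x) ▸ hx)).symm) (hcon x h0)
    have hinj : Function.Injective A := by
      intro x y hxy
      have : A (x - y) = 0 := by rw [map_sub, hxy, sub_self]
      have := hker0 _ this
      exact sub_eq_zero.mp this
    have hsurj : Function.Surjective A :=
      LinearMap.injective_iff_surjective.mp hinj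
    exact spectrum.mem_iff.mp hz (ContinuousLinearMap.isUnit_iff_bijective.mpr ⟨hinj, hsurj⟩)
  obtain ⟨x, hx0, hx⟩ := hker
  refine ⟨z.re, x, hx0, ?_, ?_⟩
  · rw [hx, ← hzre]
  · rw [← hzn]
    conv_rhs => rw [hzre]
    rw [Complex.norm_real, Real.norm_eq_abs]

section Abstract

variable (P Q : EuclideanSpace ℂ (Fin n) →L[ℂ] EuclideanSpace ℂ (Fin n))

/-- Pointwise idempotence. -/
lemma idem_apply (hP : P * P = P) (y : Euc) : P (P y) = P y := by
  have := ContinuousLinearMap.ext_iff.mp hP y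
  rwa [ContinuousLinearMap.mul_apply] at this

lemma proj_inner_self (hPsa : IsSelfAdjoint P) (hP : P * P = P) (y : Euc) :
    inner ℂ (P y) y = ((‖P y‖ ^ 2 : ℝ) : ℂ) := by
  have hs : (P : Euc →ₗ[ℂ] Euc).IsSymmetric :=
    (ContinuousLinearMap.isSelfAdjoint_iff_isSymmetric).mp hPsa
  calc inner ℂ (P y) y = inner ℂ (P (P y)) y := by rw [idem_apply P hP]
    _ = inner ℂ (P y) (P y) := hs _ _
    _ = ((‖P y‖ ^ 2 : ℝ) : ℂ) := inner_self_complex _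

lemma proj_norm_apply_le (hPsa : IsSelfAdjoint P) (hP : P * P = P) (y : Euc) :
    ‖P y‖ ≤ ‖y‖ := by
  have h1 : ‖P y‖ ^ 2 ≤ ‖P y‖ * ‖y‖ := by
    have h2 := norm_inner_le_norm (𝕜 := ℂ) (P y) y
    rw [proj_inner_self P hPsa hP y, Complex.norm_real, Real.norm_eq_abs,
      abs_of_nonneg (by positivity)] at h2
    exact h2
  rcases eq_or_lt_of_le (norm_nonneg (P y)) with h0 | h0
  · rw [← h0]
    exact norm_nonneg y
  · nlinarith

set_option maxHeartbeats 2000000 in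
lemma norm_add_le_one_add_abstract (hPsa : IsSelfAdjoint P) (hQsa : IsSelfAdjoint Q)
    (hP : P * P = P) (hQ : Q * Q = Q) : ‖P + Q‖ ≤ 1 + ‖P * Q‖ := by
  rcases le_or_gt ‖P + Q‖ 1 with hle | hgt
  · have : (0:ℝ) ≤ ‖P * Q‖ := norm_nonneg _
    linarith
  · have hT0 : (P + Q) ≠ 0 := by
      intro h0
      rw [h0, norm_zero] at hgt
      linarith
    have hsa : IsSelfAdjoint (P + Q) :=
      IsSelfAdjoint.add (R := EuclideanSpace ℂ (Fin n) →L[ℂ] EuclideanSpace ℂ (Fin n)) hPsa hQsa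
    obtain ⟨μ, x, hx0, hx, hμ⟩ := exists_eigenvector _ hsa hT0
    have hxx : (0:ℝ) < ‖x‖ := norm_pos_iff.mpr hx0
    have hadd : P x + Q x = (μ:ℂ) • x := by
      rw [← ContinuousLinearMap.add_apply]
      exact hx
    have hreal : μ * ‖x‖ ^ 2 = ‖P x‖ ^ 2 + ‖Q x‖ ^ 2 := by
      have h1 : inner ℂ ((P+Q) x) x = ((‖P x‖ ^ 2 + ‖Q x‖ ^ 2 : ℝ):ℂ) := by
        rw [ContinuousLinearMap.add_apply, inner_add_left, proj_inner_self P hPsa hP,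
          proj_inner_self Q hQsa hQ]
        push_cast
        ring
      have h2 : inner ℂ ((P+Q) x) x = ((μ * ‖x‖ ^ 2 : ℝ):ℂ) := by
        rw [hx, inner_smul_left, inner_self_complex]
        push_cast [Complex.conj_ofReal]
        ring
      have h3 := h2.symm.trans h1
      exact_mod_cast h3
    have hμ0 : 0 ≤ μ := by nlinarith [sq_nonneg ‖P x‖, sq_nonneg ‖Q x‖, mul_pos hxx hxx]
    have hμT : μ = ‖P + Q‖ := by rw [← hμ, abs_of_nonneg hμ0]
    have hμ1 : 1 < μ := hμT ▸ hgt
    have hQx : Q x ≠ 0 := by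
      intro hQ0
      have hPx : P x = (μ:ℂ) • x := by rw [← hadd, hQ0, add_zero]
      have h3 : ‖P x‖ ≤ ‖x‖ := proj_norm_apply_le P hPsa hP x
      rw [hPx, norm_smul, Complex.norm_real, Real.norm_eq_abs, abs_of_nonneg hμ0] at h3
      nlinarith
    have hQxx : (0:ℝ) < ‖Q x‖ := norm_pos_iff.mpr hQx
    have hQP : Q (P x) = ((μ:ℂ) - 1) • Q x := by
      have h4 : Q (P x) + Q (Q x) = (μ:ℂ) • Q x := by
        rw [← map_add, ← map_smul, hadd]
      rw [idem_apply Q hQ] at h4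
      rw [sub_smul, one_smul, ← h4]
      abel
    have hPQ : P (Q x) = ((μ:ℂ) - 1) • P x := by
      have h4 : P (P x) + P (Q x) = (μ:ℂ) • P x := by
        rw [← map_add, ← map_smul, hadd]
      rw [idem_apply P hP] at h4
      rw [sub_smul, one_smul]
      rw [add_comm] at h4
      rw [← h4]
      abel
    have hkey : (Q * P * Q) (Q x) = (((μ:ℂ) - 1) ^ 2) • Q x := by
      have h4 : (Q * P * Q) (Q x) = Q (P (Q (Q x))) := rfl
      rw [h4, idem_apply Q hQ, hPQ, map_smul, hQP, smul_smul]
      ring_nf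
    have hstar : star (P * Q) = Q * P := by
      rw [star_mul, hPsa.star_eq, hQsa.star_eq]
    have hprod : Q * P * Q = ContinuousLinearMap.adjoint (P * Q) ∘L (P * Q) := by
      rw [← ContinuousLinearMap.star_eq_adjoint, hstar, ← ContinuousLinearMap.mul_def,
        mul_assoc Q P (P * Q), ← mul_assoc P P Q, hP, ← mul_assoc]
    have hPQP : ‖Q * P * Q‖ = ‖P * Q‖ * ‖P * Q‖ := by
      rw [hprod, ContinuousLinearMap.norm_adjoint_comp_self]
    have hbound : (μ - 1) ^ 2 * ‖Q x‖ ≤ ‖P * Q‖ * ‖P * Q‖ * ‖Q x‖ := by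
      have h5 : ‖(Q * P * Q) (Q x)‖ ≤ ‖Q * P * Q‖ * ‖Q x‖ := ContinuousLinearMap.le_opNorm _ _
      rw [hkey, norm_smul, hPQP] at h5
      have h6 : ‖((μ:ℂ) - 1) ^ 2‖ = (μ - 1) ^ 2 := by
        have h7 : ((μ:ℂ) - 1) = ((μ - 1 : ℝ) : ℂ) := by push_cast; ring
        rw [h7, ← Complex.ofReal_pow, Complex.norm_real, Real.norm_eq_abs,
          abs_of_nonneg (by positivity)]
      rw [h6] at h5
      exact h5
    have h7 : (μ - 1) ^ 2 ≤ ‖P * Q‖ * ‖P * Q‖ := le_of_mul_le_mul_right hbound hQxx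
    have h8 : (0:ℝ) ≤ ‖P * Q‖ := norm_nonneg _
    have h9 : μ ≤ 1 + ‖P * Q‖ := by nlinarith
    rw [← hμT]
    exact h9

set_option maxHeartbeats 2000000 in
lemma one_add_le_norm_add_abstract (hPsa : IsSelfAdjoint P) (hQsa : IsSelfAdjoint Q)
    (hP : P * P = P) (hQ : Q * Q = Q) (hc : 0 < ‖P * Q‖) :
    1 + ‖P * Q‖ ≤ ‖P + Q‖ := by
  set c : ℝ := ‖P * Q‖ with hcdef
  have hstar : star (P * Q) = Q * P := by
    rw [star_mul, hPsa.star_eq, hQsa.star_eq]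
  have hSstar : star (P * Q) * (P * Q) = Q * P * Q := by
    rw [hstar, mul_assoc, ← mul_assoc P P Q, hP, ← mul_assoc]
  have hSsa : IsSelfAdjoint (Q * P * Q) := hSstar ▸ IsSelfAdjoint.star_mul_self (P * Q)
  have hSnorm : ‖Q * P * Q‖ = c * c := by
    have h1 : Q * P * Q = ContinuousLinearMap.adjoint (P * Q) ∘L (P * Q) := by
      rw [← ContinuousLinearMap.star_eq_adjoint, ← ContinuousLinearMap.mul_def, hSstar]
    rw [h1, ContinuousLinearMap.norm_adjoint_comp_self]
  have hS0 : Q * P * Q ≠ 0 := by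
    intro h0
    rw [h0, norm_zero] at hSnorm
    nlinarith
  obtain ⟨μ, u, hu0, hSu, hμ⟩ := exists_eigenvector _ hSsa hS0
  have huu : (0:ℝ) < ‖u‖ := norm_pos_iff.mpr hu0
  have hinner : (inner ℂ ((Q * P * Q) u) u : ℂ) = inner ℂ ((P * Q) u) ((P * Q) u) := by
    rw [← hSstar, ContinuousLinearMap.mul_apply, ContinuousLinearMap.star_eq_adjoint,
      ContinuousLinearMap.adjoint_inner_left]
  have hreal : μ * ‖u‖ ^ 2 = ‖(P * Q) u‖ ^ 2 := by
    have h1 : inner ℂ ((Q * P * Q) u) u = ((μ * ‖u‖ ^ 2 : ℝ):ℂ) := by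
      rw [hSu, inner_smul_left, inner_self_complex]
      push_cast [Complex.conj_ofReal]
      ring
    have h2 : inner ℂ ((P * Q) u) ((P * Q) u) = ((‖(P * Q) u‖ ^ 2 : ℝ):ℂ) :=
      inner_self_complex _
    have h3 := h1.symm.trans (hinner.trans h2)
    exact_mod_cast h3
  have hμ0 : 0 ≤ μ := by nlinarith [sq_nonneg ‖(P * Q) u‖, mul_pos huu huu]
  have hμc : μ = c * c := by rw [← abs_of_nonneg hμ0, hμ, hSnorm]
  have hμpos : (0:ℝ) < μ := by nlinarith
  have hμC : (μ:ℂ) ≠ 0 := by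
    simp only [ne_eq, Complex.ofReal_eq_zero]
    linarith
  have hQu : Q u = u := by
    have h1 : Q ((Q * P * Q) u) = (Q * P * Q) u := by
      have h2 : (Q * P * Q) u = Q ((P * Q) u) := rfl
      rw [h2, idem_apply Q hQ]
    rw [hSu, map_smul] at h1
    have h4 : ((μ:ℂ))⁻¹ • ((μ:ℂ) • Q u) = ((μ:ℂ))⁻¹ • ((μ:ℂ) • u) := by rw [h1]
    rwa [inv_smul_smul₀ hμC, inv_smul_smul₀ hμC] at h4
  have hPv : P (P u) = P u := idem_apply P hP u
  have hPQu : (P * Q) u = P u := by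
    rw [ContinuousLinearMap.mul_apply, hQu]
  have hQv : Q (P u) = (μ:ℂ) • u := by
    have h1 : Q (P u) = (Q * P * Q) u := by
      show Q (P u) = Q (P (Q u))
      rw [hQu]
    rw [h1, hSu]
  have hv2 : ‖P u‖ ^ 2 = μ * ‖u‖ ^ 2 := by
    rw [hreal, hPQu]
  have hvu : inner ℂ (P u) u = ((μ * ‖u‖ ^ 2 : ℝ):ℂ) := by
    rw [proj_inner_self P hPsa hP u, hv2]
  have huv : inner ℂ u (P u) = ((μ * ‖u‖ ^ 2 : ℝ):ℂ) := by
    rw [← inner_conj_symm, hvu, Complex.conj_ofReal]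
  set w : Euc := (c:ℂ) • u + P u with hwdef
  have hw : (P + Q) w = ((1 + c : ℝ):ℂ) • w := by
    rw [ContinuousLinearMap.add_apply, hwdef]
    rw [map_add, map_add, map_smul, map_smul, hPv, hQv, hQu]
    rw [hμc]
    push_cast
    module
  have hw0 : w ≠ 0 := by
    intro h0
    have h1 : inner ℂ u w = ((c * ‖u‖ ^ 2 + μ * ‖u‖ ^ 2 : ℝ):ℂ) := by
      rw [hwdef, inner_add_right, inner_smul_right, inner_self_complex, huv]
      push_cast
      ring
    rw [h0, inner_zero_right] at h1
    have h2 : c * ‖u‖ ^ 2 + μ * ‖u‖ ^ 2 = 0 := by exact_mod_cast h1.symm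
    nlinarith [mul_pos huu huu]
  have hww : (0:ℝ) < ‖w‖ := norm_pos_iff.mpr hw0
  have h9 : (1 + c) * ‖w‖ ≤ ‖P + Q‖ * ‖w‖ := by
    have h5 : ‖(P + Q) w‖ ≤ ‖P + Q‖ * ‖w‖ := ContinuousLinearMap.le_opNorm _ _
    rw [hw, norm_smul, Complex.norm_real, Real.norm_eq_abs,
      abs_of_nonneg (by positivity)] at h5
    exact h5
  exact le_of_mul_le_mul_right h9 hww

end Abstract

lemma one_le_norm_add (K L : Submodule ℂ Euc) (hK : K ≠ ⊥) :
    1 ≤ ‖projCLM K + projCLM L‖ := by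
  obtain ⟨x, hxK, hx0⟩ := Submodule.ne_bot_iff K |>.mp hK
  have hxx : (0:ℝ) < ‖x‖ := norm_pos_iff.mpr hx0
  have hPx : projCLM K x = x := projCLM_apply_mem K hxK
  have h1 : inner ℂ ((projCLM K + projCLM L) x) x = ((‖x‖ ^ 2 + ‖projCLM L x‖ ^ 2 : ℝ) : ℂ) := by
    rw [ContinuousLinearMap.add_apply, inner_add_left,
      proj_inner_self _ (projCLM_sa K) (projCLM_idem K),
      proj_inner_self _ (projCLM_sa L) (projCLM_idem L), hPx]
    push_cast
    ring
  have h2 : ‖x‖ ^ 2 + ‖projCLM L x‖ ^ 2 ≤ ‖projCLM K + projCLM L‖ * (‖x‖ * ‖x‖) := by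
    calc ‖x‖ ^ 2 + ‖projCLM L x‖ ^ 2 = ‖((‖x‖ ^ 2 + ‖projCLM L x‖ ^ 2 : ℝ) : ℂ)‖ := by
          rw [Complex.norm_real, Real.norm_eq_abs, abs_of_nonneg (by positivity)]
      _ = ‖inner ℂ ((projCLM K + projCLM L) x) x‖ := by rw [h1]
      _ ≤ ‖(projCLM K + projCLM L) x‖ * ‖x‖ := norm_inner_le_norm _ _
      _ ≤ ‖projCLM K + projCLM L‖ * ‖x‖ * ‖x‖ := by
          gcongr
          exact ContinuousLinearMap.le_opNorm _ _
      _ = _ := by ring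
  nlinarith [sq_nonneg ‖projCLM L x‖, mul_pos hxx hxx]

end Helpers

/-- For orthogonal projections `P`, `Q` onto subspaces `M`, `N` of `ℂⁿ`
(not both zero), one has `‖P + Q‖ = 1 + ‖P Q‖`. -/
theorem norm_add_of_orthogonalProjections {n : ℕ}
    (M N : Submodule ℂ (EuclideanSpace ℂ (Fin n))) (h : M ≠ ⊥ ∨ N ≠ ⊥) :
    ‖projCLM M + projCLM N‖ = 1 + ‖(projCLM M).comp (projCLM N)‖ := by
  have key : ‖(projCLM M).comp (projCLM N)‖ = ‖projCLM M * projCLM N‖ := rfl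
  rw [key]
  apply le_antisymm
  · exact norm_add_le_one_add_abstract _ _ (projCLM_sa M) (projCLM_sa N)
      (projCLM_idem M) (projCLM_idem N)
  rcases eq_or_lt_of_le (norm_nonneg (projCLM M * projCLM N)) with hc | hc
  · rw [← hc, add_zero]
    rcases h with hM | hN
    · exact one_le_norm_add M N hM
    · rw [add_comm (projCLM M) (projCLM N)]
      exact one_le_norm_add N M hN
  · exact one_add_le_norm_add_abstract _ _ (projCLM_sa M) (projCLM_sa N)
      (projCLM_idem M) (projCLM_idem N) hc
end

section
/- Let M, N be subspaces of ℂ^n with orthogonal projections P_M, P_N. Writing P_M = P_{M∩N} + P_{M∩N^⊥} + P_{R_M} and P_N = P_{M∩N} + P_{M^⊥∩N} + P_{R_N} where R is the orthogonal complement of (M∩N) ⊕ (M∩N^⊥) ⊕ (M^⊥∩N) ⊕ (M^⊥∩N^⊥), R_M = M∩R, R_N = N∩R, one has P_M P_N = P_{M∩N} + P_{R_M} P_{R_N}, where the two summands act on orthogonal subspaces (so P_M P_N = P_{M∩N} ⊕ P_{R_M} P_{R_N}). -/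
open scoped ComplexInnerProductSpace

lemma projCLM_comp_eq_zero {n : ℕ} (A B : Submodule ℂ (EuclideanSpace ℂ (Fin n)))
    (h : B ≤ Aᗮ) : (projCLM A).comp (projCLM B) = 0 := by
  ext x
  have hmem : ((B.orthogonalProjectionOnto x : EuclideanSpace ℂ (Fin n))) ∈ Aᗮ :=
    h (B.orthogonalProjectionOnto x).2
  simp [projCLM, ((Submodule.starProjection_apply_eq_zero_iff A).2 hmem :
    A.starProjection (B.starProjection x) = 0)]

lemma projCLM_comp_self {n : ℕ} (A : Submodule ℂ (EuclideanSpace ℂ (Fin n))) :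
    (projCLM A).comp (projCLM A) = projCLM A := by
  ext x
  simp [projCLM, Submodule.starProjection_eq_self_iff.2 (Submodule.starProjection_apply_mem A x)]

lemma projCLM_sup {n : ℕ} (A B : Submodule ℂ (EuclideanSpace ℂ (Fin n)))
    (h : A ≤ Bᗮ) : projCLM (A ⊔ B) = projCLM A + projCLM B := by
  have hBA : B ≤ Aᗮ := (Submodule.le_orthogonal_orthogonal B).trans (Submodule.orthogonal_le h)
  ext x
  have hv : ((A.orthogonalProjectionOnto x : EuclideanSpace ℂ (Fin n)) +
      (B.orthogonalProjectionOnto x : EuclideanSpace ℂ (Fin n))) ∈ A ⊔ B :=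
    Submodule.add_mem _ (Submodule.mem_sup_left (A.orthogonalProjectionOnto x).2)
      (Submodule.mem_sup_right (B.orthogonalProjectionOnto x).2)
  have hA : x - ((A.orthogonalProjectionOnto x : EuclideanSpace ℂ (Fin n)) +
      (B.orthogonalProjectionOnto x : EuclideanSpace ℂ (Fin n))) ∈ Aᗮ := by
    have h1 : x - (A.orthogonalProjectionOnto x : EuclideanSpace ℂ (Fin n)) ∈ Aᗮ :=
      Submodule.sub_starProjection_mem_orthogonal x
    have h2 : ((B.orthogonalProjectionOnto x : EuclideanSpace ℂ (Fin n))) ∈ Aᗮ :=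
      hBA (B.orthogonalProjectionOnto x).2
    have := Submodule.sub_mem _ h1 h2
    simpa [sub_sub] using this
  have hB : x - ((A.orthogonalProjectionOnto x : EuclideanSpace ℂ (Fin n)) +
      (B.orthogonalProjectionOnto x : EuclideanSpace ℂ (Fin n))) ∈ Bᗮ := by
    have h1 : x - (B.orthogonalProjectionOnto x : EuclideanSpace ℂ (Fin n)) ∈ Bᗮ :=
      Submodule.sub_starProjection_mem_orthogonal x
    have h2 : ((A.orthogonalProjectionOnto x : EuclideanSpace ℂ (Fin n))) ∈ Bᗮ :=
      h (A.orthogonalProjectionOnto x).2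
    have := Submodule.sub_mem _ h1 h2
    have e : x - (B.orthogonalProjectionOnto x : EuclideanSpace ℂ (Fin n)) -
        (A.orthogonalProjectionOnto x : EuclideanSpace ℂ (Fin n)) =
        x - ((A.orthogonalProjectionOnto x : EuclideanSpace ℂ (Fin n)) +
          (B.orthogonalProjectionOnto x : EuclideanSpace ℂ (Fin n))) := by rw [sub_sub, add_comm]
    rwa [e] at this
  have horth : x - ((A.orthogonalProjectionOnto x : EuclideanSpace ℂ (Fin n)) +
      (B.orthogonalProjectionOnto x : EuclideanSpace ℂ (Fin n))) ∈ (A ⊔ B)ᗮ := by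
    rw [← Submodule.inf_orthogonal]
    exact ⟨hA, hB⟩
  have : (((A ⊔ B).orthogonalProjectionOnto x : EuclideanSpace ℂ (Fin n))) =
      (A.orthogonalProjectionOnto x : EuclideanSpace ℂ (Fin n)) +
        (B.orthogonalProjectionOnto x : EuclideanSpace ℂ (Fin n)) :=
    Submodule.eq_starProjection_of_mem_orthogonal (K := A ⊔ B) hv horth
  simp [projCLM, this]

/-- Let `R` be the orthogonal complement of `(M∩N) ⊕ (M∩Nᗮ) ⊕ (Mᗮ∩N) ⊕ (Mᗮ∩Nᗮ)`,
`R_M = M∩R`, `R_N = N∩R`. Then `P_M P_N = P_{M∩N} + P_{R_M} P_{R_N}`, and the two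
summands act on the mutually orthogonal subspaces `M∩N` and `R`. -/
theorem product_projections_decomposition {n : ℕ}
    (M N R RM RN : Submodule ℂ (EuclideanSpace ℂ (Fin n)))
    (hR : R = ((M ⊓ N) ⊔ (M ⊓ Nᗮ) ⊔ (Mᗮ ⊓ N) ⊔ (Mᗮ ⊓ Nᗮ))ᗮ)
    (hRM : RM = M ⊓ R) (hRN : RN = N ⊓ R) :
    (projCLM M).comp (projCLM N) =
      projCLM (M ⊓ N) + (projCLM RM).comp (projCLM RN) ∧
    ∀ x ∈ M ⊓ N, ∀ y ∈ R, ⟪x, y⟫ = 0 := by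
  set S : Submodule ℂ (EuclideanSpace ℂ (Fin n)) :=
    (M ⊓ N) ⊔ (M ⊓ Nᗮ) ⊔ (Mᗮ ⊓ N) ⊔ (Mᗮ ⊓ Nᗮ) with hS
  -- basic inclusions
  have hMN_S : M ⊓ N ≤ S := le_sup_left.trans (le_sup_left.trans le_sup_left)
  have hMNp_S : M ⊓ Nᗮ ≤ S := le_sup_right.trans (le_sup_left.trans le_sup_left)
  have hMpN_S : Mᗮ ⊓ N ≤ S := le_sup_right.trans le_sup_left
  have hMpNp_S : Mᗮ ⊓ Nᗮ ≤ S := le_sup_right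
  have hR' : R = Sᗮ := hR
  have hRM_R : RM ≤ R := hRM ▸ inf_le_right
  have hRN_R : RN ≤ R := hRN ▸ inf_le_right
  have hRM_M : RM ≤ M := hRM ▸ inf_le_left
  have hRN_N : RN ≤ N := hRN ▸ inf_le_left
  have hS_Rorth : S ≤ Rᗮ := hR' ▸ Submodule.le_orthogonal_orthogonal S
  -- decomposition of M
  have hTM : (M ⊓ N) ⊔ (M ⊓ Nᗮ) ≤ M := sup_le inf_le_left inf_le_left
  have hMdec : M = (M ⊓ N) ⊔ ((M ⊓ Nᗮ) ⊔ RM) := by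
    have key : ((M ⊓ N) ⊔ (M ⊓ Nᗮ))ᗮ ⊓ M = RM := by
      apply le_antisymm
      · rintro x ⟨hxT, hxM⟩
        rw [hRM]
        refine ⟨hxM, ?_⟩
        rw [hR']
        rw [hS]
        rw [← Submodule.inf_orthogonal, ← Submodule.inf_orthogonal, ← Submodule.inf_orthogonal]
        have hxMoo : x ∈ Mᗮᗮ := Submodule.le_orthogonal_orthogonal M hxM
        refine ⟨⟨⟨?_, ?_⟩, ?_⟩, ?_⟩
        · exact (Submodule.orthogonal_le le_sup_left) hxT
        · exact (Submodule.orthogonal_le le_sup_right) hxT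
        · exact (Submodule.orthogonal_le inf_le_left) hxMoo
        · exact (Submodule.orthogonal_le inf_le_left) hxMoo
      · rintro x hx
        rw [hRM] at hx
        refine ⟨?_, hx.1⟩
        have : x ∈ Sᗮ := hR' ▸ hx.2
        exact Submodule.orthogonal_le (le_sup_left.trans le_sup_left) this
    calc M = ((M ⊓ N) ⊔ (M ⊓ Nᗮ)) ⊔ (((M ⊓ N) ⊔ (M ⊓ Nᗮ))ᗮ ⊓ M) :=
            (Submodule.sup_orthogonal_inf_of_hasOrthogonalProjection hTM).symm
      _ = (M ⊓ N) ⊔ ((M ⊓ Nᗮ) ⊔ RM) := by rw [key, sup_assoc]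
  -- decomposition of N
  have hTN : (M ⊓ N) ⊔ (Mᗮ ⊓ N) ≤ N := sup_le inf_le_right inf_le_right
  have hNdec : N = (M ⊓ N) ⊔ ((Mᗮ ⊓ N) ⊔ RN) := by
    have key : ((M ⊓ N) ⊔ (Mᗮ ⊓ N))ᗮ ⊓ N = RN := by
      apply le_antisymm
      · rintro x ⟨hxT, hxN⟩
        rw [hRN]
        refine ⟨hxN, ?_⟩
        rw [hR', hS]
        rw [← Submodule.inf_orthogonal, ← Submodule.inf_orthogonal, ← Submodule.inf_orthogonal]
        have hxNoo : x ∈ Nᗮᗮ := Submodule.le_orthogonal_orthogonal N hxN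
        refine ⟨⟨⟨?_, ?_⟩, ?_⟩, ?_⟩
        · exact (Submodule.orthogonal_le le_sup_left) hxT
        · exact (Submodule.orthogonal_le inf_le_right) hxNoo
        · exact (Submodule.orthogonal_le le_sup_right) hxT
        · exact (Submodule.orthogonal_le inf_le_right) hxNoo
      · rintro x hx
        rw [hRN] at hx
        refine ⟨?_, hx.1⟩
        have : x ∈ Sᗮ := hR' ▸ hx.2
        refine Submodule.orthogonal_le ?_ this
        exact sup_le (le_sup_left.trans (le_sup_left.trans le_sup_left))
          (le_sup_right.trans le_sup_left)
    calc N = ((M ⊓ N) ⊔ (Mᗮ ⊓ N)) ⊔ (((M ⊓ N) ⊔ (Mᗮ ⊓ N))ᗮ ⊓ N) :=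
            (Submodule.sup_orthogonal_inf_of_hasOrthogonalProjection hTN).symm
      _ = (M ⊓ N) ⊔ ((Mᗮ ⊓ N) ⊔ RN) := by rw [key, sup_assoc]
  -- orthogonality facts (of the form B ≤ Aᗮ)
  have hRM_Sorth : RM ≤ Sᗮ := hR' ▸ hRM_R
  have hRN_Sorth : RN ≤ Sᗮ := hR' ▸ hRN_R
  have hS_RMorth : S ≤ RMᗮ :=
    (Submodule.le_orthogonal_orthogonal S).trans (Submodule.orthogonal_le hRM_Sorth)
  have hS_RNorth : S ≤ RNᗮ :=
    (Submodule.le_orthogonal_orthogonal S).trans (Submodule.orthogonal_le hRN_Sorth)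
  have hNoo : N ≤ Nᗮᗮ := Submodule.le_orthogonal_orthogonal N
  have hMoo : M ≤ Mᗮᗮ := Submodule.le_orthogonal_orthogonal M
  -- projection decompositions
  have hPM : projCLM M = projCLM (M ⊓ N) + (projCLM (M ⊓ Nᗮ) + projCLM RM) := by
    have h1 : M ⊓ N ≤ (M ⊓ Nᗮ ⊔ RM)ᗮ := by
      rw [← Submodule.inf_orthogonal]
      exact le_inf (inf_le_right.trans (hNoo.trans (Submodule.orthogonal_le inf_le_right)))
        (hMN_S.trans hS_RMorth)
    conv_lhs => rw [hMdec]
    rw [projCLM_sup _ _ h1, projCLM_sup _ _ (hMNp_S.trans hS_RMorth)]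
  have hPN : projCLM N = projCLM (M ⊓ N) + (projCLM (Mᗮ ⊓ N) + projCLM RN) := by
    have h1 : M ⊓ N ≤ (Mᗮ ⊓ N ⊔ RN)ᗮ := by
      rw [← Submodule.inf_orthogonal]
      exact le_inf (inf_le_left.trans (hMoo.trans (Submodule.orthogonal_le inf_le_left)))
        (hMN_S.trans hS_RNorth)
    conv_lhs => rw [hNdec]
    rw [projCLM_sup _ _ h1, projCLM_sup _ _ (hMpN_S.trans hS_RNorth)]
  -- zero cross terms
  have z1 : (projCLM (M ⊓ N)).comp (projCLM (Mᗮ ⊓ N)) = 0 :=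
    projCLM_comp_eq_zero _ _ (inf_le_left.trans (Submodule.orthogonal_le inf_le_left))
  have z2 : (projCLM (M ⊓ N)).comp (projCLM RN) = 0 :=
    projCLM_comp_eq_zero _ _ (hRN_Sorth.trans (Submodule.orthogonal_le hMN_S))
  have z3 : (projCLM (M ⊓ Nᗮ)).comp (projCLM (M ⊓ N)) = 0 :=
    projCLM_comp_eq_zero _ _
      (inf_le_right.trans (hNoo.trans (Submodule.orthogonal_le inf_le_right)))
  have z4 : (projCLM (M ⊓ Nᗮ)).comp (projCLM (Mᗮ ⊓ N)) = 0 :=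
    projCLM_comp_eq_zero _ _ (inf_le_left.trans (Submodule.orthogonal_le inf_le_left))
  have z5 : (projCLM (M ⊓ Nᗮ)).comp (projCLM RN) = 0 :=
    projCLM_comp_eq_zero _ _
      (hRN_N.trans (hNoo.trans (Submodule.orthogonal_le inf_le_right)))
  have z6 : (projCLM RM).comp (projCLM (M ⊓ N)) = 0 :=
    projCLM_comp_eq_zero _ _ (hMN_S.trans hS_RMorth)
  have z7 : (projCLM RM).comp (projCLM (Mᗮ ⊓ N)) = 0 :=
    projCLM_comp_eq_zero _ _ (hMpN_S.trans hS_RMorth)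
  constructor
  · rw [hPM, hPN]
    simp only [ContinuousLinearMap.add_comp, ContinuousLinearMap.comp_add,
      projCLM_comp_self, z1, z2, z3, z4, z5, z6, z7, add_zero, zero_add]
  · intro x hx y hy
    have hyS : y ∈ Sᗮ := hR' ▸ hy
    exact (Submodule.mem_orthogonal S y).1 hyS x (hMN_S hx)
end

section
/- Let M and N be subspaces of ℂ^n in generalized generic position: M∩N = M^⊥∩N^⊥ = {0} and dim(M∩N^⊥) = dim(M^⊥∩N), with dim M = dim N = p. If θ_1 ≤ ⋯ ≤ θ_p are the principal angles between M and N and η_1 ≤ ⋯ ≤ η_p are the principal angles between M^⊥ and N^⊥, then θ_i = η_i for all i = 1,...,p. -/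
open scoped ComplexInnerProductSpace

/-- Principal system for `(M, N)` (recursive definition of principal angles/vectors). -/
def IsPrincipalSystem {n q : ℕ} (M N : Submodule ℂ (EuclideanSpace ℂ (Fin n)))
    (u v : Fin q → EuclideanSpace ℂ (Fin n)) (θ : Fin q → ℝ) : Prop :=
  ∀ i : Fin q,
    u i ∈ M ∧ v i ∈ N ∧ ‖u i‖ = 1 ∧ ‖v i‖ = 1 ∧
    (∀ j : Fin q, j < i → ⟪u j, u i⟫ = 0 ∧ ⟪v j, v i⟫ = 0) ∧
    θ i ∈ Set.Icc 0 (Real.pi / 2) ∧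
    ⟪u i, v i⟫ = (Real.cos (θ i) : ℂ) ∧
    ∀ x ∈ M, ∀ y ∈ N, ‖x‖ = 1 → ‖y‖ = 1 →
      (∀ j : Fin q, j < i → ⟪u j, x⟫ = 0) →
      (∀ j : Fin q, j < i → ⟪v j, y⟫ = 0) →
      ‖⟪x, y⟫‖ ≤ Real.cos (θ i)

section Helpers

variable {E : Type*} [NormedAddCommGroup E] [InnerProductSpace ℂ E]

lemma norm_one_of_inner_self {x : E} (h : ⟪x, x⟫ = 1) : ‖x‖ = 1 := by
  have h2 := inner_self_eq_norm_sq (𝕜 := ℂ) x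
  rw [h] at h2
  simp only [RCLike.one_re] at h2
  nlinarith [norm_nonneg x]

lemma inner_self_one_of_norm_one {x : E} (h : ‖x‖ = 1) : ⟪x, x⟫ = 1 := by
  rw [inner_self_eq_norm_sq_to_K, h]; norm_num

end Helpers

namespace IsPrincipalSystem

variable {n q : ℕ} {M N : Submodule ℂ (EuclideanSpace ℂ (Fin n))}
  {u v : Fin q → EuclideanSpace ℂ (Fin n)} {θ : Fin q → ℝ}

lemma symm (h : IsPrincipalSystem M N u v θ) : IsPrincipalSystem N M v u θ := by
  intro i
  obtain ⟨h1, h2, h3, h4, h5, h6, h7, h8⟩ := h i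
  refine ⟨h2, h1, h4, h3, fun j hj => ⟨(h5 j hj).2, (h5 j hj).1⟩, h6, ?_, ?_⟩
  · rw [← inner_conj_symm, h7, Complex.conj_ofReal]
  · intro y hy x hx hny hnx hcy hcx
    have := h8 x hx y hy hnx hny hcx hcy
    rwa [← inner_conj_symm x y, Complex.norm_conj] at this

lemma orthonormal_left (h : IsPrincipalSystem M N u v θ) : Orthonormal ℂ u := by
  rw [orthonormal_iff_ite]
  intro i j
  rcases lt_trichotomy i j with hij | rfl | hij
  · rw [if_neg hij.ne, ((h j).2.2.2.2.1 i hij).1]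
  · rw [if_pos rfl, inner_self_one_of_norm_one (h i).2.2.1]
  · rw [if_neg hij.ne', ← inner_conj_symm, ((h i).2.2.2.2.1 j hij).1, map_zero]

lemma orthonormal_right (h : IsPrincipalSystem M N u v θ) : Orthonormal ℂ v :=
  h.symm.orthonormal_left

lemma cos_nonneg (h : IsPrincipalSystem M N u v θ) (i : Fin q) : 0 ≤ Real.cos (θ i) :=
  Real.cos_nonneg_of_mem_Icc ⟨by linarith [(h i).2.2.2.2.2.1.1, Real.pi_pos], (h i).2.2.2.2.2.1.2⟩

lemma cross_lt (h : IsPrincipalSystem M N u v θ) {i j : Fin q} (hij : i < j) :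
    ⟪u i, v j⟫ = 0 := by
  obtain ⟨h1, h2, h3, h4, h5, h6, h7, h8⟩ := h i
  obtain ⟨g1, g2, g3, g4, g5, g6, g7, g8⟩ := h j
  set c := Real.cos (θ i) with hcdef
  have hc : 0 ≤ c := h.cos_nonneg i
  set g := ⟪u i, v j⟫ with hgdef
  set r := ‖g‖ with hrdef
  have hr : 0 ≤ r := norm_nonneg g
  have hvij : ⟪v i, v j⟫ = 0 := (g5 i hij).2
  have bound0 : r ≤ c := by
    refine h8 (u i) h1 (v j) g2 h3 g4 (fun k hk => (h5 k hk).1)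
      (fun k hk => (g5 k (hk.trans hij)).2)
  have boundε : ∀ ε : ℝ, 0 < ε → (c + ε * r)^2 ≤ c^2 * (1 + ε^2) := by
    intro ε hε
    by_cases hg0 : g = 0
    · have : r = 0 := by rw [hrdef, hg0, norm_zero]
      rw [this]; nlinarith
    have hr' : 0 < r := norm_pos_iff.mpr hg0
    set a : ℂ := ((ε / r : ℝ) : ℂ) * (starRingEnd ℂ) g with hadef
    have hag : a * g = ((ε * r : ℝ) : ℂ) := by
      rw [hadef, mul_assoc, mul_comm ((starRingEnd ℂ) g) g, Complex.mul_conj,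
        Complex.normSq_eq_norm_sq, ← hrdef]
      have hrne : (r : ℂ) ≠ 0 := by exact_mod_cast hr'.ne'
      push_cast
      field_simp
    set y0 : EuclideanSpace ℂ (Fin n) := v i + a • v j with hy0def
    have hinner : ⟪u i, y0⟫ = ((c + ε * r : ℝ) : ℂ) := by
      rw [hy0def, inner_add_right, inner_smul_right, h7, ← hgdef, hag]
      push_cast; ring
    have hself : ⟪y0, y0⟫ = ((1 + ε^2 : ℝ) : ℂ) := by
      rw [hy0def]
      rw [inner_add_add_self, inner_smul_left, inner_smul_right, inner_smul_left,
        inner_smul_right, hvij, ← inner_conj_symm (v j) (v i), hvij,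
        inner_self_one_of_norm_one h4, inner_self_one_of_norm_one g4]
      have haa : (starRingEnd ℂ) a * a = ((ε^2 : ℝ) : ℂ) := by
        rw [mul_comm, Complex.mul_conj, Complex.normSq_eq_norm_sq]
        have : ‖a‖ = ε := by
          rw [hadef, norm_mul, Complex.norm_real, Real.norm_eq_abs, Complex.norm_conj, ← hrdef,
            abs_of_pos (div_pos hε hr'), div_mul_cancel₀ _ hr'.ne']
        rw [this]
      simp only [map_zero, mul_zero, zero_mul, mul_one]
      rw [haa]
      push_cast; ring
    have hy0norm : ‖y0‖ = Real.sqrt (1 + ε^2) := by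
      have h2 := inner_self_eq_norm_sq (𝕜 := ℂ) y0
      rw [hself] at h2
      simp only [RCLike.re_to_complex, Complex.ofReal_re] at h2
      rw [h2, Real.sqrt_sq (norm_nonneg _)]
    have hsqpos : 0 < Real.sqrt (1 + ε^2) := Real.sqrt_pos.2 (by positivity)
    set y : EuclideanSpace ℂ (Fin n) := ((Real.sqrt (1 + ε^2) : ℝ) : ℂ)⁻¹ • y0 with hydef
    have hyN : y ∈ N := N.smul_mem _ (N.add_mem h2 (N.smul_mem _ g2))
    have hynorm : ‖y‖ = 1 := by
      rw [hydef, norm_smul, norm_inv, Complex.norm_real, Real.norm_eq_abs,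
        abs_of_pos hsqpos, hy0norm, inv_mul_cancel₀ hsqpos.ne']
    have hconstr : ∀ k : Fin q, k < i → ⟪v k, y⟫ = 0 := by
      intro k hk
      rw [hydef, inner_smul_right, hy0def, inner_add_right, inner_smul_right,
        (h5 k hk).2, (g5 k (hk.trans hij)).2]
      ring
    have hmax := h8 (u i) h1 y hyN h3 hynorm (fun k hk => (h5 k hk).1) hconstr
    have hiy : ⟪u i, y⟫ = (((Real.sqrt (1 + ε^2))⁻¹ * (c + ε * r) : ℝ) : ℂ) := by
      rw [hydef, inner_smul_right, hinner]
      push_cast; ring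
    rw [hiy, Complex.norm_real, Real.norm_eq_abs, abs_of_nonneg (by positivity)] at hmax
    have hle : c + ε * r ≤ c * Real.sqrt (1 + ε^2) := by
      rw [inv_mul_le_iff₀ hsqpos] at hmax
      linarith [hmax]
    calc (c + ε * r)^2 ≤ (c * Real.sqrt (1 + ε^2))^2 := by
          apply pow_le_pow_left₀ (by positivity) hle
      _ = c^2 * (1 + ε^2) := by
          rw [mul_pow, Real.sq_sqrt (by positivity)]
  -- conclude r = 0, hence g = 0
  have hr0 : r = 0 := by
    rcases hc.eq_or_lt with hceq | hcpos
    · linarith [bound0]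
    · by_contra hrne
      have hr' : 0 < r := lt_of_le_of_ne hr (Ne.symm hrne)
      have h1' := boundε (r / c) (div_pos hr' hcpos)
      have hrc : (r / c) * c = r := div_mul_cancel₀ _ hcpos.ne'
      nlinarith [h1', mul_pos hr' hcpos, sq_nonneg (r / c), mul_pos (div_pos hr' hcpos) hr']
  rwa [hrdef, norm_eq_zero] at hr0

lemma cross (h : IsPrincipalSystem M N u v θ) {i j : Fin q} (hij : i ≠ j) :
    ⟪u i, v j⟫ = 0 := by
  rcases lt_or_gt_of_ne hij with hlt | hgt
  · exact h.cross_lt hlt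
  · rw [← inner_conj_symm, h.symm.cross_lt hgt, map_zero]

end IsPrincipalSystem


variable {n p : ℕ}

lemma span_eq_of_orthonormal {W : Submodule ℂ (EuclideanSpace ℂ (Fin n))}
    (hW : Module.finrank ℂ W = p) {b : Fin p → EuclideanSpace ℂ (Fin n)}
    (hb : Orthonormal ℂ b) (hmem : ∀ i, b i ∈ W) :
    Submodule.span ℂ (Set.range b) = W := by
  apply Submodule.eq_of_le_of_finrank_eq
  · rw [Submodule.span_le]
    rintro x ⟨i, rfl⟩
    exact hmem i
  · rw [finrank_span_eq_card hb.linearIndependent, Fintype.card_fin, hW]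

lemma expand_of_orthonormal {W : Submodule ℂ (EuclideanSpace ℂ (Fin n))}
    (hW : Module.finrank ℂ W = p) {b : Fin p → EuclideanSpace ℂ (Fin n)}
    (hb : Orthonormal ℂ b) (hmem : ∀ i, b i ∈ W) {x : EuclideanSpace ℂ (Fin n)}
    (hx : x ∈ W) : x = ∑ i, ⟪b i, x⟫ • b i := by
  have hx' : x ∈ Submodule.span ℂ (Set.range b) := by
    rw [span_eq_of_orthonormal hW hb hmem]; exact hx
  obtain ⟨α, hα⟩ := (Submodule.mem_span_range_iff_exists_fun ℂ).1 hx'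
  rw [← hα]
  refine Finset.sum_congr rfl fun i _ => ?_
  rw [hb.inner_right_fintype]

lemma inner_zero_of_coords {W : Submodule ℂ (EuclideanSpace ℂ (Fin n))}
    (hW : Module.finrank ℂ W = p) {b : Fin p → EuclideanSpace ℂ (Fin n)}
    (hb : Orthonormal ℂ b) (hmem : ∀ i, b i ∈ W) {r : EuclideanSpace ℂ (Fin n)}
    (hr : ∀ i, ⟪b i, r⟫ = 0) : ∀ y ∈ W, ⟪y, r⟫ = 0 := by
  intro y hy
  rw [expand_of_orthonormal hW hb hmem hy, sum_inner]
  simp [inner_smul_left, hr]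

set_option maxHeartbeats 1000000 in
lemma key_le {A B : Submodule ℂ (EuclideanSpace ℂ (Fin n))}
    (hA : Module.finrank ℂ A = p) (hB : Module.finrank ℂ B = p)
    {w t' s t : Fin p → EuclideanSpace ℂ (Fin n)} {c d : Fin p → ℝ}
    (hw : Orthonormal ℂ w) (ht' : Orthonormal ℂ t')
    (hs : Orthonormal ℂ s) (ht : Orthonormal ℂ t)
    (hwA : ∀ i, w i ∈ A) (ht'B : ∀ i, t' i ∈ B)
    (hsA : ∀ i, s i ∈ A) (htB : ∀ i, t i ∈ B)
    (hdiag1 : ∀ i j, ⟪w i, t' j⟫ = if i = j then ((c i : ℝ) : ℂ) else 0)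
    (hdiag2 : ∀ i j, ⟪s i, t j⟫ = if i = j then ((d i : ℝ) : ℂ) else 0)
    (hcanti : ∀ i j : Fin p, i ≤ j → c j ≤ c i) (hc0 : ∀ i, 0 ≤ c i)
    (hdanti : ∀ i j : Fin p, i ≤ j → d j ≤ d i) (hd0 : ∀ i, 0 ≤ d i)
    (k : Fin p) : c k ≤ d k := by
  have hkp : (k : ℕ) < p := k.2
  have hk1 : (k : ℕ) + 1 ≤ p := hkp
  -- the two subspaces
  set f : Fin ((k : ℕ) + 1) → Fin p := Fin.castLE hk1 with hfdef
  set g : Fin (p - (k : ℕ)) → Fin p := fun j => ⟨(k : ℕ) + j, by omega⟩ with hgdef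
  have hginj : Function.Injective g := by
    intro a b hab
    rw [hgdef] at hab
    simp only [Fin.mk.injEq] at hab
    exact Fin.ext (by omega)
  set S := Submodule.span ℂ (Set.range (w ∘ f)) with hSdef
  set T := Submodule.span ℂ (Set.range (s ∘ g)) with hTdef
  have hSA : S ≤ A := by
    rw [hSdef, Submodule.span_le]; rintro x ⟨i, rfl⟩; exact hwA _
  have hTA : T ≤ A := by
    rw [hTdef, Submodule.span_le]; rintro x ⟨i, rfl⟩; exact hsA _
  have hSdim : Module.finrank ℂ S = (k : ℕ) + 1 := by
    rw [hSdef, finrank_span_eq_card (hw.linearIndependent.comp f (Fin.castLE_injective hk1)),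
      Fintype.card_fin]
  have hTdim : Module.finrank ℂ T = p - (k : ℕ) := by
    rw [hTdef, finrank_span_eq_card (hs.linearIndependent.comp g hginj), Fintype.card_fin]
  have hsum := Submodule.finrank_sup_add_finrank_inf_eq S T
  have hsup : Module.finrank ℂ ((S ⊔ T : Submodule ℂ (EuclideanSpace ℂ (Fin n)))) ≤ p := by
    calc Module.finrank ℂ (S ⊔ T : Submodule ℂ (EuclideanSpace ℂ (Fin n)))
        ≤ Module.finrank ℂ A := Submodule.finrank_mono (sup_le hSA hTA)
      _ = p := hA
  have hinf : Module.finrank ℂ ((S ⊓ T : Submodule ℂ (EuclideanSpace ℂ (Fin n)))) ≠ 0 := by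
    omega
  have hne : (S ⊓ T : Submodule ℂ (EuclideanSpace ℂ (Fin n))) ≠ ⊥ := by
    intro hbot
    rw [hbot, finrank_bot] at hinf
    exact hinf rfl
  obtain ⟨x, hxmem, hx0⟩ := Submodule.ne_bot_iff _ |>.1 hne
  have hxS : x ∈ S := hxmem.1
  have hxT : x ∈ T := hxmem.2
  have hxA : x ∈ A := hSA hxS
  set a : Fin p → ℂ := fun j => ⟪w j, x⟫ with hadef
  set b : Fin p → ℂ := fun j => ⟪s j, x⟫ with hbdef
  have hxw : x = ∑ j, a j • w j := expand_of_orthonormal hA hw hwA hxA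
  have hxs : x = ∑ j, b j • s j := expand_of_orthonormal hA hs hsA hxA
  -- vanishing of coordinates
  have hva : ∀ j : Fin p, (k : ℕ) < (j : ℕ) → a j = 0 := by
    intro j hj
    obtain ⟨α, hα⟩ := (Submodule.mem_span_range_iff_exists_fun ℂ).1 hxS
    rw [hadef]
    simp only
    rw [← hα, inner_sum]
    refine Finset.sum_eq_zero fun m _ => ?_
    rw [Function.comp_apply, inner_smul_right, orthonormal_iff_ite.mp hw]
    have : j ≠ f m := by
      intro he
      rw [hfdef] at he
      have : (j : ℕ) = (m : ℕ) := by
        have := congrArg (Fin.val) he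
        simpa using this
      have hmk : (m : ℕ) ≤ (k : ℕ) := by omega
      omega
    rw [if_neg this, mul_zero]
  have hvb : ∀ j : Fin p, (j : ℕ) < (k : ℕ) → b j = 0 := by
    intro j hj
    obtain ⟨α, hα⟩ := (Submodule.mem_span_range_iff_exists_fun ℂ).1 hxT
    rw [hbdef]
    simp only
    rw [← hα, inner_sum]
    refine Finset.sum_eq_zero fun m _ => ?_
    rw [Function.comp_apply, inner_smul_right, orthonormal_iff_ite.mp hs]
    have : j ≠ g m := by
      intro he
      rw [hgdef] at he
      have := congrArg (Fin.val) he
      simp only at this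
      omega
    rw [if_neg this, mul_zero]
  -- projections
  set l1 : Fin p → ℂ := fun j => ((c j : ℝ) : ℂ) * a j with hl1def
  set l2 : Fin p → ℂ := fun j => ((d j : ℝ) : ℂ) * b j with hl2def
  set z1 := ∑ j, l1 j • t' j with hz1def
  set z2 := ∑ j, l2 j • t j with hz2def
  have hz1B : z1 ∈ B := Submodule.sum_mem _ fun j _ => Submodule.smul_mem _ _ (ht'B j)
  have hz2B : z2 ∈ B := Submodule.sum_mem _ fun j _ => Submodule.smul_mem _ _ (htB j)
  have hr1 : ∀ m, ⟪t' m, x - z1⟫ = 0 := by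
    intro m
    rw [inner_sub_right]
    have h1 : ⟪t' m, x⟫ = l1 m := by
      conv_lhs => rw [hxw]
      rw [inner_sum]
      rw [Finset.sum_eq_single m]
      · rw [inner_smul_right, ← inner_conj_symm, hdiag1, if_pos rfl, Complex.conj_ofReal,
          hl1def]
        ring
      · intro j _ hj
        rw [inner_smul_right, ← inner_conj_symm, hdiag1, if_neg hj, map_zero, mul_zero]
      · intro hm; exact absurd (Finset.mem_univ m) hm
    rw [h1, ht'.inner_right_fintype, sub_self]
  have hr2 : ∀ m, ⟪t m, x - z2⟫ = 0 := by
    intro m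
    rw [inner_sub_right]
    have h1 : ⟪t m, x⟫ = l2 m := by
      conv_lhs => rw [hxs]
      rw [inner_sum]
      rw [Finset.sum_eq_single m]
      · rw [inner_smul_right, ← inner_conj_symm, hdiag2, if_pos rfl, Complex.conj_ofReal,
          hl2def]
        ring
      · intro j _ hj
        rw [inner_smul_right, ← inner_conj_symm, hdiag2, if_neg hj, map_zero, mul_zero]
      · intro hm; exact absurd (Finset.mem_univ m) hm
    rw [h1, ht.inner_right_fintype, sub_self]
  have hz12 : z1 = z2 := by
    have hdB : z1 - z2 ∈ B := Submodule.sub_mem _ hz1B hz2B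
    have e1 : ⟪z1 - z2, x - z1⟫ = 0 :=
      inner_zero_of_coords hB ht' ht'B hr1 _ hdB
    have e2 : ⟪z1 - z2, x - z2⟫ = 0 :=
      inner_zero_of_coords hB ht htB hr2 _ hdB
    have : ⟪z1 - z2, z1 - z2⟫ = 0 := by
      have : ⟪z1 - z2, z1 - z2⟫ = ⟪z1 - z2, x - z2⟫ - ⟪z1 - z2, x - z1⟫ := by
        rw [← inner_sub_right]
        congr 1
        abel
      rw [this, e1, e2, sub_zero]
    rwa [inner_self_eq_zero, sub_eq_zero] at this
  -- norms
  have hQ : (∑ j, (c j)^2 * Complex.normSq (a j)) = ∑ j, (d j)^2 * Complex.normSq (b j) := by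
    have e1 : ⟪z1, z1⟫ = ((∑ j, (c j)^2 * Complex.normSq (a j) : ℝ) : ℂ) := by
      rw [hz1def, ht'.inner_sum]
      push_cast
      refine Finset.sum_congr rfl fun j _ => ?_
      rw [hl1def]
      simp only [map_mul, Complex.conj_ofReal]
      rw [Complex.normSq_eq_conj_mul_self]
      ring
    have e2 : ⟪z2, z2⟫ = ((∑ j, (d j)^2 * Complex.normSq (b j) : ℝ) : ℂ) := by
      rw [hz2def, ht.inner_sum]
      push_cast
      refine Finset.sum_congr rfl fun j _ => ?_
      rw [hl2def]
      simp only [map_mul, Complex.conj_ofReal]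
      rw [Complex.normSq_eq_conj_mul_self]
      ring
    have := e1.symm.trans (by rw [hz12, e2])
    exact_mod_cast this
  have hSa : ⟪x, x⟫ = ((∑ j, Complex.normSq (a j) : ℝ) : ℂ) := by
    conv_lhs => rw [hxw]
    rw [hw.inner_sum]
    push_cast
    refine Finset.sum_congr rfl fun j _ => ?_
    rw [Complex.normSq_eq_conj_mul_self]
  have hSb : ⟪x, x⟫ = ((∑ j, Complex.normSq (b j) : ℝ) : ℂ) := by
    conv_lhs => rw [hxs]
    rw [hs.inner_sum]
    push_cast
    refine Finset.sum_congr rfl fun j _ => ?_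
    rw [Complex.normSq_eq_conj_mul_self]
  set Sa : ℝ := ∑ j, Complex.normSq (a j) with hSadef
  set Sb : ℝ := ∑ j, Complex.normSq (b j) with hSbdef
  have hSab : Sa = Sb := by
    have := hSa.symm.trans hSb
    exact_mod_cast this
  have hSapos : 0 < Sa := by
    have hxx : ⟪x, x⟫ ≠ 0 := fun hz => hx0 (inner_self_eq_zero.1 hz)
    rw [hSa] at hxx
    have : Sa ≠ 0 := fun hz => hxx (by rw [hSadef] at hz ⊢; rw [hz]; norm_num)
    have hSann : 0 ≤ Sa := Finset.sum_nonneg fun j _ => Complex.normSq_nonneg _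
    exact lt_of_le_of_ne hSann (Ne.symm this)
  -- the two inequalities
  have ineq1 : (c k)^2 * Sa ≤ ∑ j, (c j)^2 * Complex.normSq (a j) := by
    rw [hSadef, Finset.mul_sum]
    refine Finset.sum_le_sum fun j _ => ?_
    rcases le_or_gt (j : ℕ) (k : ℕ) with hjk | hjk
    · have : c k ≤ c j := hcanti j k (by exact_mod_cast hjk)
      have := mul_le_mul_of_nonneg_right
        (mul_self_le_mul_self (hc0 k) this) (Complex.normSq_nonneg (a j))
      calc (c k)^2 * Complex.normSq (a j) = (c k) * (c k) * Complex.normSq (a j) := by ring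
        _ ≤ (c j) * (c j) * Complex.normSq (a j) := this
        _ = (c j)^2 * Complex.normSq (a j) := by ring
    · rw [hva j hjk]
      simp
  have ineq2 : (∑ j, (d j)^2 * Complex.normSq (b j)) ≤ (d k)^2 * Sb := by
    rw [hSbdef, Finset.mul_sum]
    refine Finset.sum_le_sum fun j _ => ?_
    rcases lt_or_ge (j : ℕ) (k : ℕ) with hjk | hjk
    · rw [hvb j hjk]
      simp
    · have : d j ≤ d k := hdanti k j (by exact_mod_cast hjk)
      have := mul_le_mul_of_nonneg_right
        (mul_self_le_mul_self (hd0 j) this) (Complex.normSq_nonneg (b j))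
      calc (d j)^2 * Complex.normSq (b j) = (d j) * (d j) * Complex.normSq (b j) := by ring
        _ ≤ (d k) * (d k) * Complex.normSq (b j) := this
        _ = (d k)^2 * Complex.normSq (b j) := by ring
  have hfinal : (c k)^2 * Sa ≤ (d k)^2 * Sa := by
    calc (c k)^2 * Sa ≤ ∑ j, (c j)^2 * Complex.normSq (a j) := ineq1
      _ = ∑ j, (d j)^2 * Complex.normSq (b j) := hQ
      _ ≤ (d k)^2 * Sb := ineq2
      _ = (d k)^2 * Sa := by rw [hSab]
  have hsq : (c k)^2 ≤ (d k)^2 := le_of_mul_le_mul_right hfinal hSapos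
  nlinarith [hc0 k, hd0 k, hsq]

section Construct

variable {M N : Submodule ℂ (EuclideanSpace ℂ (Fin n))}
  {u v : Fin p → EuclideanSpace ℂ (Fin n)} {θ : Fin p → ℝ}

-- assume facts proven elsewhere:
lemma exists_diag
    (hM : Module.finrank ℂ M = p) (hN : Module.finrank ℂ N = p) (hMN : M ⊓ N = ⊥)
    (hu : Orthonormal ℂ u) (hv : Orthonormal ℂ v)
    (huM : ∀ i, u i ∈ M) (hvN : ∀ i, v i ∈ N)
    (hIcc : ∀ i, θ i ∈ Set.Icc 0 (Real.pi / 2))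
    (hnu : ∀ i, ‖u i‖ = 1) (hnv : ∀ i, ‖v i‖ = 1)
    (huv : ∀ i j, ⟪u i, v j⟫ = if i = j then ((Real.cos (θ i) : ℝ) : ℂ) else 0) :
    ∃ w t' : Fin p → EuclideanSpace ℂ (Fin n), Orthonormal ℂ w ∧ Orthonormal ℂ t' ∧
      (∀ i, w i ∈ Mᗮ) ∧ (∀ i, t' i ∈ Nᗮ) ∧
      (∀ i j, ⟪w i, t' j⟫ = if i = j then ((Real.cos (θ i) : ℝ) : ℂ) else 0) := by
  set c : Fin p → ℝ := fun i => Real.cos (θ i) with hcdef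
  set si : Fin p → ℝ := fun i => Real.sin (θ i) with hsidef
  have hθpos : ∀ i, 0 < θ i := by
    intro i
    rcases (hIcc i).1.eq_or_lt with he | hl
    · exfalso
      have hcos1 : ⟪u i, v i⟫ = 1 := by
        rw [huv i i, if_pos rfl, ← he, Real.cos_zero]
        norm_num
      have : u i = v i := (inner_eq_one_iff_of_norm_eq_one (hnu i) (hnv i)).1 hcos1
      have hmem : u i ∈ M ⊓ N := ⟨huM i, this ▸ hvN i⟩
      rw [hMN, Submodule.mem_bot] at hmem
      have := hnu i
      rw [hmem] at this
      simp at this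
    · exact hl
  have hspos : ∀ i, 0 < si i := by
    intro i
    exact Real.sin_pos_of_pos_of_lt_pi (hθpos i)
      (lt_of_le_of_lt (hIcc i).2 (by linarith [Real.pi_pos]))
  have hsne : ∀ i, (si i : ℂ) ≠ 0 := fun i => by
    exact_mod_cast (hspos i).ne'
  have hid : ∀ i, (si i)^2 = 1 - (c i)^2 := fun i => by
    have := Real.sin_sq_add_cos_sq (θ i)
    rw [hsidef, hcdef]; simp only; nlinarith [this]
  have hvu : ∀ i j, ⟪v i, u j⟫ = if i = j then ((c j : ℝ) : ℂ) else 0 := by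
    intro i j
    rw [← inner_conj_symm, huv j i]
    by_cases h : i = j
    · subst h
      rw [if_pos rfl, Complex.conj_ofReal]
    · rw [if_neg (fun he => h he.symm), if_neg h, map_zero]
  have huu : ∀ i j, ⟪u i, u j⟫ = if i = j then (1 : ℂ) else 0 := fun i j =>
    orthonormal_iff_ite.mp hu i j
  have hvv : ∀ i j, ⟪v i, v j⟫ = if i = j then (1 : ℂ) else 0 := fun i j =>
    orthonormal_iff_ite.mp hv i j
  set w : Fin p → EuclideanSpace ℂ (Fin n) :=
    fun i => (((si i)⁻¹ : ℝ) : ℂ) • (v i - ((c i : ℝ) : ℂ) • u i) with hwdef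
  set t' : Fin p → EuclideanSpace ℂ (Fin n) :=
    fun i => (((si i)⁻¹ : ℝ) : ℂ) • (((c i : ℝ) : ℂ) • v i - u i) with ht'def
  have hww : ∀ i j, ⟪w i, w j⟫ = if i = j then (1 : ℂ) else 0 := by
    intro i j
    rw [hwdef]
    simp only [inner_smul_left, inner_smul_right, inner_sub_left, inner_sub_right,
      Complex.conj_ofReal, huu, hvv, huv, hvu]
    by_cases h : i = j
    · subst h
      simp only [if_pos rfl]
      have : ((si i : ℝ) : ℂ) ≠ 0 := hsne i
      have hidC : ((si i : ℝ) : ℂ) * ((si i : ℝ) : ℂ) = 1 - ((c i : ℝ) : ℂ) * ((c i : ℝ) : ℂ) := by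
        have := hid i
        have h2 : ((si i ^ 2 : ℝ) : ℂ) = ((1 - c i ^ 2 : ℝ) : ℂ) := by exact_mod_cast congrArg Complex.ofReal this
        push_cast at h2
        linear_combination h2
      field_simp
      simp only [if_true, hcdef, one_div, Complex.ofReal_inv] at hidC this ⊢
      field_simp
      linear_combination -hidC
    · simp [if_neg h, if_neg (fun he => h he)]
  have ht't' : ∀ i j, ⟪t' i, t' j⟫ = if i = j then (1 : ℂ) else 0 := by
    intro i j
    rw [ht'def]
    simp only [inner_smul_left, inner_smul_right, inner_sub_left, inner_sub_right,
      Complex.conj_ofReal, huu, hvv, huv, hvu]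
    by_cases h : i = j
    · subst h
      simp only [if_pos rfl]
      have hidC : ((si i : ℝ) : ℂ) * ((si i : ℝ) : ℂ) = 1 - ((c i : ℝ) : ℂ) * ((c i : ℝ) : ℂ) := by
        have := hid i
        have h2 : ((si i ^ 2 : ℝ) : ℂ) = ((1 - c i ^ 2 : ℝ) : ℂ) := by
          exact_mod_cast congrArg Complex.ofReal this
        push_cast at h2
        linear_combination h2
      have : ((si i : ℝ) : ℂ) ≠ 0 := hsne i
      field_simp
      simp only [if_true, hcdef, one_div, Complex.ofReal_inv] at hidC this ⊢
      field_simp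
      linear_combination -hidC
    · simp [if_neg h, if_neg (fun he => h he)]
  have hwt' : ∀ i j, ⟪w i, t' j⟫ = if i = j then ((c i : ℝ) : ℂ) else 0 := by
    intro i j
    rw [hwdef, ht'def]
    simp only [inner_smul_left, inner_smul_right, inner_sub_left, inner_sub_right,
      Complex.conj_ofReal, huu, hvv, huv, hvu]
    by_cases h : i = j
    · subst h
      simp only [if_pos rfl]
      have hidC : ((si i : ℝ) : ℂ) * ((si i : ℝ) : ℂ) = 1 - ((c i : ℝ) : ℂ) * ((c i : ℝ) : ℂ) := by
        have := hid i
        have h2 : ((si i ^ 2 : ℝ) : ℂ) = ((1 - c i ^ 2 : ℝ) : ℂ) := by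
          exact_mod_cast congrArg Complex.ofReal this
        push_cast at h2
        linear_combination h2
      have : ((si i : ℝ) : ℂ) ≠ 0 := hsne i
      field_simp
      simp only [if_true, hcdef, one_div, Complex.ofReal_inv] at hidC this ⊢
      field_simp
      linear_combination -((Real.cos (θ i) : ℝ) : ℂ) * hidC
    · simp [if_neg h, if_neg (fun he => h he)]
  have hwM : ∀ i, w i ∈ Mᗮ := by
    intro i
    rw [Submodule.mem_orthogonal]
    refine fun y hy => inner_zero_of_coords hM hu huM ?_ y hy
    intro j
    rw [hwdef]
    simp only [inner_smul_right, inner_sub_right, huv, huu]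
    by_cases h : j = i
    · subst h; simp
      exact Or.inr (by rw [← Complex.ofReal_cos]; exact sub_self _)
    · simp [if_neg h]
  have ht'N : ∀ i, t' i ∈ Nᗮ := by
    intro i
    rw [Submodule.mem_orthogonal]
    refine fun y hy => inner_zero_of_coords hN hv hvN ?_ y hy
    intro j
    rw [ht'def]
    simp only [inner_smul_right, inner_sub_right, hvv, hvu]
    by_cases h : j = i
    · subst h; simp
    · simp [if_neg h]
  exact ⟨w, t', orthonormal_iff_ite.mpr hww, orthonormal_iff_ite.mpr ht't', hwM, ht'N, hwt'⟩

end Construct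

/-- If `M`, `N` are subspaces of `ℂⁿ` in generalized generic position
(`M ⊓ N = Mᗮ ⊓ Nᗮ = ⊥` and `dim (M ⊓ Nᗮ) = dim (Mᗮ ⊓ N)`) with
`dim M = dim N = p`, then the principal angles `θ` between `M` and `N` coincide
with the principal angles `η` between `Mᗮ` and `Nᗮ`. -/
theorem principal_angles_eq_of_generalized_generic_position {n p : ℕ}
    (M N : Submodule ℂ (EuclideanSpace ℂ (Fin n)))
    (hMN : M ⊓ N = ⊥) (hM'N' : Mᗮ ⊓ Nᗮ = ⊥)
    (hcd : Module.finrank ℂ (M ⊓ Nᗮ : Submodule ℂ (EuclideanSpace ℂ (Fin n))) =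
      Module.finrank ℂ (Mᗮ ⊓ N : Submodule ℂ (EuclideanSpace ℂ (Fin n))))
    (hM : Module.finrank ℂ M = p) (hN : Module.finrank ℂ N = p)
    (u v s t : Fin p → EuclideanSpace ℂ (Fin n)) (θ η : Fin p → ℝ)
    (hθmono : Monotone θ) (hηmono : Monotone η)
    (hθ : IsPrincipalSystem M N u v θ)
    (hη : IsPrincipalSystem Mᗮ Nᗮ s t η) :
    ∀ i : Fin p, θ i = η i := by
  classical
  have hfin : Module.finrank ℂ (EuclideanSpace ℂ (Fin n)) = n := finrank_euclideanSpace_fin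
  have hMperp : Module.finrank ℂ (Mᗮ : Submodule ℂ (EuclideanSpace ℂ (Fin n))) = n - p := by
    have h1 := Submodule.finrank_add_finrank_orthogonal (K := M)
    rw [hM, hfin] at h1
    omega
  have hNperp : Module.finrank ℂ (Nᗮ : Submodule ℂ (EuclideanSpace ℂ (Fin n))) = n - p := by
    have h1 := Submodule.finrank_add_finrank_orthogonal (K := N)
    rw [hN, hfin] at h1
    omega
  have hpn : p ≤ n := by
    have := Submodule.finrank_le M
    rw [hM, hfin] at this
    exact this
  have h2pn : 2 * p ≤ n := by
    have hsi := Submodule.finrank_sup_add_finrank_inf_eq M N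
    rw [hMN, finrank_bot, hM, hN] at hsi
    have hle := Submodule.finrank_le (M ⊔ N)
    rw [hfin] at hle
    omega
  have hn2p : n ≤ 2 * p := by
    have hsi := Submodule.finrank_sup_add_finrank_inf_eq Mᗮ Nᗮ
    rw [hM'N', finrank_bot, hMperp, hNperp] at hsi
    have hle := Submodule.finrank_le (Mᗮ ⊔ Nᗮ)
    rw [hfin] at hle
    omega
  have hMp : Module.finrank ℂ (Mᗮ : Submodule ℂ (EuclideanSpace ℂ (Fin n))) = p := by
    rw [hMperp]; omega
  have hNp : Module.finrank ℂ (Nᗮ : Submodule ℂ (EuclideanSpace ℂ (Fin n))) = p := by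
    rw [hNperp]; omega
  -- diagonal structure of the (s, t) system
  have hηd : ∀ i j, ⟪s i, t j⟫ = if i = j then ((Real.cos (η i) : ℝ) : ℂ) else 0 := by
    intro i j
    by_cases h : i = j
    · subst h; rw [if_pos rfl]; exact (hη i).2.2.2.2.2.2.1
    · rw [if_neg h]; exact hη.cross h
  have hθd : ∀ i j, ⟪u i, v j⟫ = if i = j then ((Real.cos (θ i) : ℝ) : ℂ) else 0 := by
    intro i j
    by_cases h : i = j
    · subst h; rw [if_pos rfl]; exact (hθ i).2.2.2.2.2.2.1
    · rw [if_neg h]; exact hθ.cross h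
  obtain ⟨w, t', hwon, ht'on, hwM, ht'N, hwt'⟩ :=
    exists_diag hM hN hMN hθ.orthonormal_left hθ.orthonormal_right
      (fun i => (hθ i).1) (fun i => (hθ i).2.1)
      (fun i => (hθ i).2.2.2.2.2.1)
      (fun i => (hθ i).2.2.1) (fun i => (hθ i).2.2.2.1) hθd
  have hcanti : ∀ i j : Fin p, i ≤ j → Real.cos (θ j) ≤ Real.cos (θ i) := fun i j hij =>
    Real.cos_le_cos_of_nonneg_of_le_pi ((hθ i).2.2.2.2.2.1.1)
      (le_trans ((hθ j).2.2.2.2.2.1.2) (by linarith [Real.pi_pos])) (hθmono hij)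
  have hdanti : ∀ i j : Fin p, i ≤ j → Real.cos (η j) ≤ Real.cos (η i) := fun i j hij =>
    Real.cos_le_cos_of_nonneg_of_le_pi ((hη i).2.2.2.2.2.1.1)
      (le_trans ((hη j).2.2.2.2.2.1.2) (by linarith [Real.pi_pos])) (hηmono hij)
  intro k
  have h1 : Real.cos (θ k) ≤ Real.cos (η k) :=
    key_le hMp hNp hwon ht'on hη.orthonormal_left hη.orthonormal_right
      hwM ht'N (fun i => (hη i).1) (fun i => (hη i).2.1)
      hwt' hηd hcanti (fun i => hθ.cos_nonneg i) hdanti (fun i => hη.cos_nonneg i) k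
  have h2 : Real.cos (η k) ≤ Real.cos (θ k) :=
    key_le hMp hNp hη.orthonormal_left hη.orthonormal_right hwon ht'on
      (fun i => (hη i).1) (fun i => (hη i).2.1) hwM ht'N
      hηd hwt' hdanti (fun i => hη.cos_nonneg i) hcanti (fun i => hθ.cos_nonneg i) k
  have hcos : Real.cos (θ k) = Real.cos (η k) := le_antisymm h1 h2
  exact Real.injOn_cos
    ⟨(hθ k).2.2.2.2.2.1.1, le_trans ((hθ k).2.2.2.2.2.1.2) (by linarith [Real.pi_pos])⟩
    ⟨(hη k).2.2.2.2.2.1.1, le_trans ((hη k).2.2.2.2.2.1.2) (by linarith [Real.pi_pos])⟩ hcos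
end
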